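/- arXiv:2405.16643 — 3 statements merged into one kernel-verified Lean document; each statement's English description precedes it below -/
import Mathlib

section
/- Let Γ : ℝ₊₊ ⇉ ℝ be a nonempty-, compact-, and convex-valued upper hemicontinuous set-valued map and fix k̄ > 0. Suppose there exist two positive continuous functions k̂(t) and k̲(t) on ℝ₊ such that k̲(t) ≤ k(t) ≤ k̂(t) for every T > 0, every solution k of the differential inclusion k̇(t) ∈ Γ(k(t)), k(0) = k̄ defined on [0,T], and every t ∈ [0,T]. Then the differential inclusion k̇(t) ∈ Γ(k(t)), k(0) = k̄ has a solution defined on all of ℝ₊. -/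
open MeasureTheory Real Set Filter Topology
open scoped ENNReal NNReal

noncomputable section

/- ## Basic analytic notions -/

/-- The positive part of an extended real number, as an element of `ℝ≥0∞`. -/
def eposPart (x : EReal) : ℝ≥0∞ := if x = ⊤ then ⊤ else ENNReal.ofReal x.toReal

/-- `f` is absolutely continuous on `[a, b]`. -/
def AbsContOn (f : ℝ → ℝ) (a b : ℝ) : Prop :=
  ∀ ε > (0:ℝ), ∃ δ > (0:ℝ), ∀ n : ℕ, ∀ s t : Fin n → ℝ,
    (∀ i, a ≤ s i ∧ s i ≤ t i ∧ t i ≤ b) →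
    (Pairwise fun i j => Disjoint (Set.Ioo (s i) (t i)) (Set.Ioo (s j) (t j))) →
    (∑ i, (t i - s i)) < δ → (∑ i, |f (t i) - f (s i)|) < ε

/-- `f` is absolutely continuous on every compact subinterval of `ℝ₊`. -/
def LocAbsCont (f : ℝ → ℝ) : Prop := ∀ a b : ℝ, 0 ≤ a → a < b → AbsContOn f a b

/-- The set `W₁` of nonnegative locally integrable control paths. -/
def W1 : Set (ℝ → ℝ) := {c | (∀ t, 0 ≤ c t) ∧ ∀ T > (0:ℝ), IntegrableOn c (Set.Icc 0 T)}

/-- The set `W₂` of nonnegative measurable locally bounded control paths. -/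
def W2 : Set (ℝ → ℝ) :=
  {c | (∀ t, 0 ≤ c t) ∧ Measurable c ∧ ∀ T > (0:ℝ), ∃ M : ℝ, ∀ t ∈ Set.Icc (0:ℝ) T, c t ≤ M}

/-- Assumption 1: positive discount rate, and `W` is `W₁` or `W₂`. -/
def Assumption1 (ρ : ℝ) (W : Set (ℝ → ℝ)) : Prop := 0 < ρ ∧ (W = W1 ∨ W = W2)

def posOrth : Set (ℝ × ℝ) := {p | 0 ≤ p.1 ∧ 0 ≤ p.2}
def posOrthOpen : Set (ℝ × ℝ) := {p | 0 < p.1 ∧ 0 < p.2}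

/-- The realized (real-valued) utility. -/
def ur (u : ℝ → ℝ → EReal) (c k : ℝ) : ℝ := (u c k).toReal
/-- The partial derivative `∂u/∂c`. -/
def ucDeriv (u : ℝ → ℝ → EReal) (c k : ℝ) : ℝ := deriv (fun c' => ur u c' k) c
/-- The partial derivative `∂u/∂k`. -/
def ukDeriv (u : ℝ → ℝ → EReal) (c k : ℝ) : ℝ := deriv (fun k' => ur u c k') k

/-- Assumption 2 on the instantaneous utility function `u : ℝ₊² → ℝ ∪ {-∞}`. -/
structure Assumption2 (u : ℝ → ℝ → EReal) : Prop where
  ne_top : ∀ c k : ℝ, u c k ≠ ⊤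
  cont : ContinuousOn (fun p : ℝ × ℝ => u p.1 p.2) posOrth
  concave : ∀ c₁ k₁ c₂ k₂ t : ℝ, 0 ≤ c₁ → 0 ≤ k₁ → 0 ≤ c₂ → 0 ≤ k₂ → 0 ≤ t → t ≤ 1 →
    ((1 - t : ℝ) : EReal) * u c₁ k₁ + (t : EReal) * u c₂ k₂ ≤
      u ((1 - t) * c₁ + t * c₂) ((1 - t) * k₁ + t * k₂)
  mono : ∀ c₁ k₁ c₂ k₂ : ℝ, 0 ≤ c₁ → 0 ≤ k₁ → c₁ ≤ c₂ → k₁ ≤ k₂ → u c₁ k₁ ≤ u c₂ k₂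
  strictMono_c : ∀ k c₁ c₂ : ℝ, 0 < k → 0 < c₁ → c₁ < c₂ → u c₁ k < u c₂ k
  ne_bot_pos : ∀ c k : ℝ, 0 < c → 0 < k → u c k ≠ ⊥
  smooth : ContDiffOn ℝ 1 (fun p : ℝ × ℝ => ur u p.1 p.2) posOrthOpen
  ne_bot_zero : ∃ c > (0:ℝ), u c 0 ≠ ⊥

/-- Assumption 3 on the technology function `F : ℝ₊² → ℝ` (with `F k c`). -/
structure Assumption3 (W : Set (ℝ → ℝ)) (F : ℝ → ℝ → ℝ) : Prop where
  cont : ContinuousOn (fun p : ℝ × ℝ => F p.1 p.2) posOrth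
  concave : ConcaveOn ℝ posOrth (fun p : ℝ × ℝ => F p.1 p.2)
  zero : F 0 0 = 0
  anti_c : ∀ k c₁ c₂ : ℝ, 0 ≤ k → 0 ≤ c₁ → c₁ < c₂ → F k c₂ < F k c₁
  lower : ∃ d₁ > (0:ℝ), ∃ δ₂ : ℝ → ℝ, (∀ c : ℝ, 0 ≤ c → 0 ≤ δ₂ c) ∧ δ₂ 0 = 0 ∧
    (∀ c₁ c₂ : ℝ, 0 ≤ c₁ → c₁ < c₂ → δ₂ c₁ < δ₂ c₂) ∧
    (∀ k c : ℝ, 0 < k → 0 ≤ c → -d₁ * k - δ₂ c < F k c) ∧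
    (W = W1 → ∃ d₂ : ℝ, 0 ≤ d₂ ∧ ∀ c : ℝ, 0 ≤ c → δ₂ c = d₂ * c)
  productive : ∀ c : ℝ, 0 ≤ c → ∃ k > (0:ℝ), F 0 c < F k c

/-- Assumption 4 on the marginal utility of consumption. -/
structure Assumption4 (u : ℝ → ℝ → EReal) : Prop where
  anti : ∀ k c₁ c₂ : ℝ, 0 < k → 0 < c₁ → c₁ < c₂ → ucDeriv u c₂ k < ucDeriv u c₁ k
  tendsto_zero : ∀ k > (0:ℝ), Tendsto (fun c => ucDeriv u c k) (𝓝[>] (0:ℝ)) atTop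
  tendsto_top : ∀ k > (0:ℝ), Tendsto (fun c => ucDeriv u c k) atTop (𝓝 0)
  k_bounded : ∀ k > (0:ℝ), ∃ M : ℝ, ∀ᶠ c in 𝓝[>] (0:ℝ), ukDeriv u c k ≤ M

/-- The CRRA (constant relative risk aversion) function. -/
def crra (θ x : ℝ) : ℝ := if θ = 1 then Real.log x else (x ^ (1 - θ) - 1) / (1 - θ)

/-- The CRRA function extended to `x = 0` with value `-∞` when `θ ≥ 1`. -/
def crraE (θ x : ℝ) : EReal :=
  if 0 < x then ((crra θ x : ℝ) : EReal)
  else if θ < 1 then ((-1 / (1 - θ) : ℝ) : EReal) else ⊥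

/-- Assumption 5 with explicit parameters. -/
structure Assumption5Data (ρ : ℝ) (u : ℝ → ℝ → EReal) (F : ℝ → ℝ → ℝ)
    (kstar cstar γ δ θ a b C : ℝ) : Prop where
  kstar_pos : 0 < kstar
  cstar_nonneg : 0 ≤ cstar
  gamma_pos : 0 < γ
  delta_pos : 0 < δ
  theta_pos : 0 < θ
  a_pos : 0 < a
  b_nonneg : 0 ≤ b
  subdiff : ∀ k c : ℝ, 0 ≤ k → 0 ≤ c →
    F k c - F kstar cstar ≤ γ * (k - kstar) - δ * (c - cstar)
  rate : 0 < ρ - (1 - θ) * γ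
  bound : ∀ c k : ℝ, 0 < c → 0 < k →
    u c k ≤ ((a * crra θ c + b * crra θ k + C : ℝ) : EReal)

/-- Assumption 5. -/
def Assumption5 (ρ : ℝ) (u : ℝ → ℝ → EReal) (F : ℝ → ℝ → ℝ) : Prop :=
  ∃ kstar cstar γ δ θ a b C : ℝ, Assumption5Data ρ u F kstar cstar γ δ θ a b C

/-- The partial derivative `∂F/∂c`. -/
def FcDeriv (F : ℝ → ℝ → ℝ) (k c : ℝ) : ℝ := deriv (fun c' => F k c') c
/-- The mixed partial derivative `∂²F/∂k∂c`. -/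
def FckDeriv (F : ℝ → ℝ → ℝ) (k c : ℝ) : ℝ := deriv (fun k' => FcDeriv F k' c) k
/-- The right partial derivative `D_{k,+}F(k,c)` of the concave function `k ↦ F(k,c)`. -/
def rightDerivK (F : ℝ → ℝ → ℝ) (k c : ℝ) : ℝ :=
  sSup {r : ℝ | ∃ t > (0:ℝ), r = (F (k + t) c - F k c) / t}

/-- Assumption 6. -/
structure Assumption6 (ρ : ℝ) (u : ℝ → ℝ → EReal) (F : ℝ → ℝ → ℝ) : Prop where
  smooth : ∃ ε₀ > (0:ℝ),
    (∀ c > (0:ℝ), ContDiffOn ℝ 1 (fun k => ucDeriv u c k) (Set.Ioo 0 ε₀)) ∧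
    ∃ H : ℝ → ℝ → ℝ,
      ContDiffOn ℝ 1 (fun p : ℝ × ℝ => H p.1 p.2) (Set.Ioo 0 ε₀ ×ˢ Set.Ioi 0) ∧
      (∀ k c : ℝ, k ∈ Set.Ioo 0 ε₀ → 0 < c → 0 < deriv (fun k' => H k' c) k) ∧
      (∀ k c : ℝ, k ∈ Set.Ioo 0 ε₀ → 0 < c → deriv (fun c' => H k c') c < 0) ∧
      (∀ k c : ℝ, k ∈ Set.Ioo 0 ε₀ → 0 < c → H k c ≠ 0 →
        ∃ ε > (0:ℝ),
          (∀ p ∈ Metric.ball ((k, c) : ℝ × ℝ) ε,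
            HasDerivAt (fun c' => F p.1 c') (FcDeriv F p.1 p.2) p.2) ∧
          ContinuousOn (fun p : ℝ × ℝ => FcDeriv F p.1 p.2) (Metric.ball ((k, c) : ℝ × ℝ) ε) ∧
          (∀ p ∈ Metric.ball ((k, c) : ℝ × ℝ) ε,
            HasDerivAt (fun k' => FcDeriv F k' p.2) (FckDeriv F p.1 p.2) p.1) ∧
          ContinuousOn (fun p : ℝ × ℝ => FckDeriv F p.1 p.2) (Metric.ball ((k, c) : ℝ × ℝ) ε))
  steep : ∃ k > (0:ℝ), ∃ r : ℝ, ρ < r ∧ ∀ c : ℝ, 0 ≤ c → r ≤ rightDerivK F k c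

/- ## Payoffs and the value function -/

/-- The discounted utility flow `e^{-ρt} u(c(t), k(t))`, as an extended real. -/
def discounted (ρ : ℝ) (u : ℝ → ℝ → EReal) (k c : ℝ → ℝ) (t : ℝ) : EReal :=
  ((Real.exp (-ρ * t) : ℝ) : EReal) * u (c t) (k t)

def payoffPos (ρ : ℝ) (u : ℝ → ℝ → EReal) (k c : ℝ → ℝ) : ℝ≥0∞ :=
  ∫⁻ t in Set.Ioi (0:ℝ), eposPart (discounted ρ u k c t)

def payoffNeg (ρ : ℝ) (u : ℝ → ℝ → EReal) (k c : ℝ → ℝ) : ℝ≥0∞ :=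
  ∫⁻ t in Set.Ioi (0:ℝ), eposPart (-(discounted ρ u k c t))

/-- `∫₀^∞ e^{-ρt} u(c(t),k(t)) dt` can be defined (possibly `±∞`). -/
def PayoffDefined (ρ : ℝ) (u : ℝ → ℝ → EReal) (k c : ℝ → ℝ) : Prop :=
  payoffPos ρ u k c ≠ ⊤ ∨ payoffNeg ρ u k c ≠ ⊤

/-- `∫₀^∞ e^{-ρt} u(c(t),k(t)) dt`, as an extended real. -/
def payoff (ρ : ℝ) (u : ℝ → ℝ → EReal) (k c : ℝ → ℝ) : EReal :=
  (payoffPos ρ u k c : EReal) - (payoffNeg ρ u k c : EReal)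

/-- `∫₀^T e^{-ρt} u(c(t),k(t)) dt`, as an extended real. -/
def payoffUpTo (ρ : ℝ) (u : ℝ → ℝ → EReal) (k c : ℝ → ℝ) (T : ℝ) : EReal :=
  ((∫⁻ t in Set.Ioc (0:ℝ) T, eposPart (discounted ρ u k c t) : ℝ≥0∞) : EReal) -
  ((∫⁻ t in Set.Ioc (0:ℝ) T, eposPart (-(discounted ρ u k c t)) : ℝ≥0∞) : EReal)

/-- The admissible pairs of problem (1) with initial capital `kbar`. -/
structure Admissible (ρ : ℝ) (W : Set (ℝ → ℝ)) (u : ℝ → ℝ → EReal) (F : ℝ → ℝ → ℝ)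
    (kbar : ℝ) (k c : ℝ → ℝ) : Prop where
  locAC : LocAbsCont k
  mem_W : c ∈ W
  k_nonneg : ∀ t : ℝ, 0 ≤ t → 0 ≤ k t
  c_nonneg : ∀ t : ℝ, 0 ≤ t → 0 ≤ c t
  defined : PayoffDefined ρ u k c
  init : k 0 = kbar
  ode : ∀ᵐ t : ℝ, 0 < t → HasDerivAt k (F (k t) (c t)) t

/-- The value function of problem (1). -/
def Vbar (ρ : ℝ) (W : Set (ℝ → ℝ)) (u : ℝ → ℝ → EReal) (F : ℝ → ℝ → ℝ) (kbar : ℝ) : EReal :=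
  sSup {x : EReal | ∃ k c : ℝ → ℝ, Admissible ρ W u F kbar k c ∧ x = payoff ρ u k c}

/-- The value function, realized as a real-valued function. -/
def VbarR (ρ : ℝ) (W : Set (ℝ → ℝ)) (u : ℝ → ℝ → EReal) (F : ℝ → ℝ → ℝ) (kbar : ℝ) : ℝ :=
  (Vbar ρ W u F kbar).toReal

/-- The value function is finite. -/
def VbarFinite (ρ : ℝ) (W : Set (ℝ → ℝ)) (u : ℝ → ℝ → EReal) (F : ℝ → ℝ → ℝ) : Prop :=
  ∀ k : ℝ, 0 < k → Vbar ρ W u F k ≠ ⊤ ∧ Vbar ρ W u F k ≠ ⊥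

/- ## The HJB equation -/

/-- The Hamiltonian `sup_{c ≥ 0} {F(k,c)p + u(c,k)}`. -/
def Ham (u : ℝ → ℝ → EReal) (F : ℝ → ℝ → ℝ) (k p : ℝ) : EReal :=
  ⨆ c : {c : ℝ // 0 ≤ c}, (((F k c.1 * p : ℝ) : EReal) + u c.1 k)

def IsViscositySubsolution (ρ : ℝ) (u : ℝ → ℝ → EReal) (F : ℝ → ℝ → ℝ) (V : ℝ → ℝ) : Prop :=
  UpperSemicontinuousOn V (Set.Ioi 0) ∧
  ∀ k : ℝ, 0 < k → ∀ φ : ℝ → ℝ, ∀ δ > (0:ℝ), Metric.ball k δ ⊆ Set.Ioi 0 →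
    ContDiffOn ℝ 1 φ (Metric.ball k δ) → φ k = V k →
    (∀ x ∈ Metric.ball k δ, φ x ≤ V x) →
    Ham u F k (deriv φ k) ≤ ((ρ * V k : ℝ) : EReal)

def IsViscositySupersolution (ρ : ℝ) (u : ℝ → ℝ → EReal) (F : ℝ → ℝ → ℝ) (V : ℝ → ℝ) : Prop :=
  LowerSemicontinuousOn V (Set.Ioi 0) ∧
  ∀ k : ℝ, 0 < k → ∀ φ : ℝ → ℝ, ∀ δ > (0:ℝ), Metric.ball k δ ⊆ Set.Ioi 0 →
    ContDiffOn ℝ 1 φ (Metric.ball k δ) → φ k = V k →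
    (∀ x ∈ Metric.ball k δ, V x ≤ φ x) →
    ((ρ * V k : ℝ) : EReal) ≤ Ham u F k (deriv φ k)

def IsViscositySolution (ρ : ℝ) (u : ℝ → ℝ → EReal) (F : ℝ → ℝ → ℝ) (V : ℝ → ℝ) : Prop :=
  ContinuousOn V (Set.Ioi 0) ∧ IsViscositySubsolution ρ u F V ∧ IsViscositySupersolution ρ u F V

/-- `V` is a classical (continuously differentiable) solution to the HJB equation on `ℝ₊₊`. -/
def IsClassicalSolution (ρ : ℝ) (u : ℝ → ℝ → EReal) (F : ℝ → ℝ → ℝ) (V : ℝ → ℝ) : Prop :=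
  (∀ k : ℝ, 0 < k → DifferentiableAt ℝ V k) ∧ ContinuousOn (deriv V) (Set.Ioi 0) ∧
  ∀ k : ℝ, 0 < k → Ham u F k (deriv V k) = ((ρ * V k : ℝ) : EReal)

/- ## Subdifferentials -/

/-- The subdifferential (superdifferential) of a concave function `G` on the set `S`. -/
def subdiffOn (G : ℝ → ℝ) (S : Set ℝ) (x : ℝ) : Set ℝ :=
  {p : ℝ | ∀ y ∈ S, G y - G x ≤ p * (y - x)}

/- ## ODEs and differential inclusions -/

/-- A positive solution of the autonomous ODE `k' = h(k)`, `k(0) = kbar`, on the interval `I`. -/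
structure SolvesODEOn (h : ℝ → ℝ) (kbar : ℝ) (k : ℝ → ℝ) (I : Set ℝ) : Prop where
  locAC : ∀ a b : ℝ, a ∈ I → b ∈ I → a < b → AbsContOn k a b
  init : k 0 = kbar
  pos : ∀ t ∈ I, 0 < k t
  hasDeriv : ∀ᵐ t : ℝ, t ∈ I → HasDerivAt k (h (k t)) t

/-- A positive solution of the differential inclusion `k' ∈ Γ(k)`, `k(0) = kbar`, on `I`. -/
structure SolvesInclOn (Γ : ℝ → Set ℝ) (kbar : ℝ) (k : ℝ → ℝ) (I : Set ℝ) : Prop where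
  locAC : ∀ a b : ℝ, a ∈ I → b ∈ I → a < b → AbsContOn k a b
  init : k 0 = kbar
  pos : ∀ t ∈ I, 0 < k t
  hasDeriv : ∀ᵐ t : ℝ, t ∈ I → ∃ d ∈ Γ (k t), HasDerivAt k d t

/-- The pure accumulation path with initial value `kbar`. -/
def IsPurePath (F : ℝ → ℝ → ℝ) (kbar : ℝ) (k : ℝ → ℝ) : Prop :=
  SolvesODEOn (fun x => F x 0) kbar k (Set.Ici 0)

/-- The growth condition (7). -/
def GrowthCondition (ρ : ℝ) (F : ℝ → ℝ → ℝ) (V : ℝ → ℝ) : Prop :=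
  ∀ kbar : ℝ, 0 < kbar → ∀ kp : ℝ → ℝ, IsPurePath F kbar kp →
    Tendsto (fun T => Real.exp (-ρ * T) * V (kp T)) atTop (𝓝 0)

/-- Membership in the space `𝒱` of increasing concave functions satisfying the growth
condition. -/
def memV (ρ : ℝ) (F : ℝ → ℝ → ℝ) (V : ℝ → ℝ) : Prop :=
  StrictMonoOn V (Set.Ioi 0) ∧ ConcaveOn ℝ (Set.Ioi 0) V ∧ GrowthCondition ρ F V

/- ## The maximizing consumption selection and the optimal differential inclusion -/

/-- `cs` is the positive continuous maximizer function `c*(p,k)` of Proposition 1. -/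
def IsMaxSelection (u : ℝ → ℝ → EReal) (F : ℝ → ℝ → ℝ) (cs : ℝ → ℝ → ℝ) : Prop :=
  (∀ p k : ℝ, 0 < p → 0 < k → 0 < cs p k) ∧
  ContinuousOn (fun q : ℝ × ℝ => cs q.1 q.2) posOrthOpen ∧
  ∀ p k : ℝ, 0 < p → 0 < k →
    ((F k (cs p k) * p : ℝ) : EReal) + u (cs p k) k = Ham u F k p

/-- The set `F(k, c*(∂V(k), k))`. -/
def inclSet (F : ℝ → ℝ → ℝ) (cs : ℝ → ℝ → ℝ) (V : ℝ → ℝ) (k : ℝ) : Set ℝ :=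
  {d : ℝ | ∃ p ∈ subdiffOn V (Set.Ioi 0) k, d = F k (cs p k)}

/-- `limsup_{n → ∞} n (k(t + 1/n) - k(t))`. -/
def forwardSlope (k : ℝ → ℝ) (t : ℝ) : ℝ :=
  Filter.limsup (fun n : ℕ => (n : ℝ) * (k (t + 1 / (n : ℝ)) - k t)) Filter.atTop

/-- The consumption path (13): `c(t)` is the element of `c*(∂V(k(t)), k(t))` closest to
`limsup_{n} n (k(t+1/n) - k(t))`. -/
def IsClosestConsumption (F : ℝ → ℝ → ℝ) (cs : ℝ → ℝ → ℝ) (V : ℝ → ℝ)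
    (k : ℝ → ℝ) (c : ℝ → ℝ) : Prop :=
  ∀ t : ℝ, 0 ≤ t →
    (∃ p ∈ subdiffOn V (Set.Ioi 0) (k t), c t = cs p (k t)) ∧
    ∀ p ∈ subdiffOn V (Set.Ioi 0) (k t),
      |forwardSlope k t - c t| ≤ |forwardSlope k t - cs p (k t)|

/-- Membership in the class `B_k̄`. -/
structure MemB (ρ : ℝ) (W : Set (ℝ → ℝ)) (u : ℝ → ℝ → EReal) (F : ℝ → ℝ → ℝ)
    (kbar : ℝ) (k c : ℝ → ℝ) : Prop where
  locAC : LocAbsCont k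
  mem_W : c ∈ W
  k_nonneg : ∀ t : ℝ, 0 ≤ t → 0 ≤ k t
  c_nonneg : ∀ t : ℝ, 0 ≤ t → 0 ≤ c t
  lim_exists : ∃ L : ℝ, Tendsto (fun T => payoffUpTo ρ u k c T) atTop (𝓝 ((L : ℝ) : EReal))
  init : k 0 = kbar
  ode : ∀ᵐ t : ℝ, 0 < t → HasDerivAt k (F (k t) (c t)) t

/- ## Quantities appearing in Lemma 4 -/

def khat (F : ℝ → ℝ → ℝ) (kstar cstar γ δ kbar : ℝ) : ℝ :=
  kbar - kstar + (δ * cstar + F kstar cstar) / γ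

def CstarConst (ρ θ γ δ kh : ℝ) : ℝ := (ρ - (1 - θ) * γ) / (θ * δ) * kh

def V3val (ρ θ γ Cs : ℝ) : ℝ :=
  if θ = 1 then Real.log Cs / ρ + (γ - ρ) / ρ ^ 2
  else Cs ^ (1 - θ) * θ / ((1 - θ) * (ρ - (1 - θ) * γ)) - 1 / (ρ * (1 - θ))

def V4val (ρ θ γ kh : ℝ) : ℝ :=
  if θ = 1 then Real.log kh / ρ + γ / ρ ^ 2
  else kh ^ (1 - θ) / ((1 - θ) * (ρ - (1 - θ) * γ)) - 1 / (ρ * (1 - θ))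

/- ## Carathéodory equations (Lemma 3) -/

/-- Carathéodory's condition for `h(t,x)` relative to the region `U`. -/
def Caratheodory (h : ℝ → ℝ → ℝ) (U : Set (ℝ × ℝ)) : Prop :=
  (∀ t : ℝ, ContinuousOn (fun x => h t x) {x : ℝ | (t, x) ∈ U}) ∧
  (∀ x : ℝ, Measurable (fun t => h t x))

/-- `h(t,x)` is Lipschitz in `x` on `U`. -/
def LipschitzInSnd (h : ℝ → ℝ → ℝ) (U : Set (ℝ × ℝ)) : Prop :=
  ∃ L > (0:ℝ), ∀ t x₁ x₂ : ℝ, (t, x₁) ∈ U → (t, x₂) ∈ U → |h t x₁ - h t x₂| ≤ L * |x₁ - x₂|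

/-- A solution on `[0,T]` of `k' = h(t,k)`, `k(0) = kbar`, with graph in `U`. -/
structure CaraSolOn (h : ℝ → ℝ → ℝ) (U : Set (ℝ × ℝ)) (kbar T : ℝ) (k : ℝ → ℝ) : Prop where
  ac : AbsContOn k 0 T
  init : k 0 = kbar
  graph : ∀ t ∈ Set.Icc (0:ℝ) T, (t, k t) ∈ U
  hasDeriv : ∀ᵐ t : ℝ, t ∈ Set.Icc (0:ℝ) T → HasDerivAt k (h t (k t)) t

/- ## The Ramsey–Cass–Koopmans specialization -/

def ur0 (u0 : ℝ → EReal) (c : ℝ) : ℝ := (u0 c).toReal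

/-- Assumption 2' on a one-variable utility function. -/
structure Assumption2' (u0 : ℝ → EReal) : Prop where
  ne_top : ∀ c : ℝ, u0 c ≠ ⊤
  cont : ContinuousOn u0 (Set.Ici 0)
  concave : ∀ c₁ c₂ t : ℝ, 0 ≤ c₁ → 0 ≤ c₂ → 0 ≤ t → t ≤ 1 →
    ((1 - t : ℝ) : EReal) * u0 c₁ + (t : EReal) * u0 c₂ ≤ u0 ((1 - t) * c₁ + t * c₂)
  strictMono : ∀ c₁ c₂ : ℝ, 0 ≤ c₁ → c₁ < c₂ → u0 c₁ < u0 c₂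
  ne_bot_pos : ∀ c : ℝ, 0 < c → u0 c ≠ ⊥
  smooth : ContDiffOn ℝ 1 (ur0 u0) (Set.Ioi 0)
  anti : ∀ c₁ c₂ : ℝ, 0 < c₁ → c₁ < c₂ → deriv (ur0 u0) c₂ < deriv (ur0 u0) c₁
  tendsto_zero : Tendsto (fun c => deriv (ur0 u0) c) (𝓝[>] (0:ℝ)) atTop
  tendsto_top : Tendsto (fun c => deriv (ur0 u0) c) atTop (𝓝 0)

/-- Assumption 3' on a production function `f` and the depreciation rate `d`. -/
structure Assumption3' (f : ℝ → ℝ) (d : ℝ) : Prop where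
  nonneg : ∀ k : ℝ, 0 ≤ k → 0 ≤ f k
  cont : ContinuousOn f (Set.Ici 0)
  concave : ConcaveOn ℝ (Set.Ici 0) f
  strictMono : StrictMonoOn f (Set.Ici 0)
  zero : f 0 = 0
  d_nonneg : 0 ≤ d
  productive : ∃ k > (0:ℝ), d * k < f k

/-- The Inada condition. -/
def InadaCondition (f : ℝ → ℝ) : Prop :=
  (∀ k : ℝ, 0 < k → DifferentiableAt ℝ f k) ∧ ContinuousOn (deriv f) (Set.Ioi 0) ∧
  StrictConcaveOn ℝ (Set.Ici 0) f ∧ deriv f '' Set.Ioi 0 = Set.Ioi 0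

/-- The utility function of the RCK model, as a function of `(c, k)`. -/
def rckU (u0 : ℝ → EReal) : ℝ → ℝ → EReal := fun c _ => u0 c

/-- The technology function of the RCK model. -/
def rckF (f : ℝ → ℝ) (d : ℝ) : ℝ → ℝ → ℝ := fun k c => f k - d * k - c



namespace InclAux

/-- Pointwise regularity properties of the set-valued map. -/
def Props (Γ : ℝ → Set ℝ) (x : ℝ) : Prop :=
  0 < x ∧ (Γ x).Nonempty ∧ IsCompact (Γ x) ∧ Convex ℝ (Γ x) ∧
    ∀ O : Set ℝ, IsOpen O → Γ x ⊆ O → ∀ᶠ y in 𝓝 x, Γ y ⊆ O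

def Mf (Γ : ℝ → Set ℝ) (x : ℝ) : ℝ := sSup (Γ x)
def mf (Γ : ℝ → Set ℝ) (x : ℝ) : ℝ := sInf (Γ x)

structure Setup (Γ : ℝ → Set ℝ) (kbar : ℝ) (R : Set ℝ) : Prop where
  mem : kbar ∈ R
  ord : R.OrdConnected
  lb : ∀ x ∈ R, kbar ≤ x
  props : ∀ x ∈ R, Props Γ x
  sign : ∀ x ∈ R, (∃ y ∈ R, x < y) → Γ x ⊆ Set.Ioi 0

variable {Γ : ℝ → Set ℝ} {kbar : ℝ} {R : Set ℝ}

lemma Mf_mem (h : Props Γ x) : Mf Γ x ∈ Γ x := h.2.2.1.sSup_mem h.2.1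
lemma mf_mem (h : Props Γ x) : mf Γ x ∈ Γ x := h.2.2.1.sInf_mem h.2.1
lemma mf_le_Mf (h : Props Γ x) : mf Γ x ≤ Mf Γ x :=
  csInf_le_csSup h.2.1 h.2.2.1.bddBelow h.2.2.1.bddAbove

lemma Icc_subset_Gamma (h : Props Γ x) : Icc (mf Γ x) (Mf Γ x) ⊆ Γ x :=
  h.2.2.2.1.ordConnected.out (mf_mem h) (Mf_mem h)

lemma Setup.Icc_subset (hS : Setup Γ kbar R) (hz : z ∈ R) : Icc kbar z ⊆ R :=
  hS.ord.out hS.mem hz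

lemma Setup.mf_pos (hS : Setup Γ kbar R) (hx : x ∈ R) (h : ∃ y ∈ R, x < y) :
    0 < mf Γ x :=
  hS.sign x hx h (mf_mem (hS.props x hx))

/-- Upper semicontinuity of `Mf` on `R`. -/
lemma Mf_lt_eventually (hS : Setup Γ kbar R) (hx : x ∈ R) (hlt : Mf Γ x < c) :
    ∀ᶠ y in 𝓝 x, y ∈ R → Mf Γ y < c := by
  have hP := hS.props x hx
  have h1 : Γ x ⊆ Iio c := fun a ha =>
    lt_of_le_of_lt (le_csSup hP.2.2.1.bddAbove ha) hlt
  filter_upwards [hP.2.2.2.2 (Iio c) isOpen_Iio h1] with y hy hyR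
  exact hy (Mf_mem (hS.props y hyR))

/-- Lower semicontinuity of `mf` on `R`. -/
lemma lt_mf_eventually (hS : Setup Γ kbar R) (hx : x ∈ R) (hlt : c < mf Γ x) :
    ∀ᶠ y in 𝓝 x, y ∈ R → c < mf Γ y := by
  have hP := hS.props x hx
  have h1 : Γ x ⊆ Ioi c := fun a ha =>
    lt_of_lt_of_le hlt (csInf_le hP.2.2.1.bddBelow ha)
  filter_upwards [hP.2.2.2.2 (Ioi c) isOpen_Ioi h1] with y hy hyR
  exact hy (mf_mem (hS.props y hyR))

lemma measurableSet_Mlt (hS : Setup Γ kbar R) (c : ℝ) :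
    MeasurableSet {u | u ∈ R ∧ Mf Γ u < c} := by
  have : {u | u ∈ R ∧ Mf Γ u < c} = R ∩ interior {y | y ∈ R → Mf Γ y < c} := by
    ext u
    constructor
    · rintro ⟨h1, h2⟩
      exact ⟨h1, mem_interior_iff_mem_nhds.2 (Mf_lt_eventually hS h1 h2)⟩
    · rintro ⟨h1, h2⟩
      exact ⟨h1, interior_subset h2 h1⟩
  rw [this]
  exact hS.ord.measurableSet.inter isOpen_interior.measurableSet

open Classical in
/-- A measurable globalization of `Mf` on `R`. -/
def Mr (Γ : ℝ → Set ℝ) (R : Set ℝ) (u : ℝ) : ℝ := if u ∈ R then Mf Γ u else 1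

lemma Mr_of_mem (hu : u ∈ R) : Mr Γ R u = Mf Γ u := if_pos hu
lemma Mr_of_not_mem (hu : u ∉ R) : Mr Γ R u = 1 := if_neg hu

lemma measurable_Mr (hS : Setup Γ kbar R) : Measurable (Mr Γ R) := by
  apply measurable_of_Iio
  intro c
  have : Mr Γ R ⁻¹' Iio c =
      {u | u ∈ R ∧ Mf Γ u < c} ∪ (if (1:ℝ) < c then Rᶜ else ∅) := by
    ext u
    by_cases hu : u ∈ R
    · simp only [mem_preimage, mem_Iio, Mr_of_mem (Γ := Γ) hu, mem_union, mem_setOf_eq]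
      constructor
      · intro h; exact Or.inl ⟨hu, h⟩
      · rintro (⟨_, h⟩ | h)
        · exact h
        · split at h <;> simp_all
    · simp only [mem_preimage, mem_Iio, Mr_of_not_mem (Γ := Γ) hu, mem_union, mem_setOf_eq]
      by_cases hc : (1:ℝ) < c <;> simp [hu, hc]

  rw [this]
  refine (measurableSet_Mlt hS c).union ?_
  split
  · exact hS.ord.measurableSet.compl
  · exact MeasurableSet.empty

def Ff (Γ : ℝ → Set ℝ) (R : Set ℝ) : ℝ → ℝ≥0∞ :=
  R.indicator (fun u => ENNReal.ofReal (Mr Γ R u)⁻¹)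

lemma measurable_Ff (hS : Setup Γ kbar R) : Measurable (Ff Γ R) :=
  ((measurable_Mr hS).inv.ennreal_ofReal).indicator hS.ord.measurableSet

lemma Ff_eq (hu : u ∈ R) : Ff Γ R u = ENNReal.ofReal (Mf Γ u)⁻¹ := by
  simp [Ff, indicator_of_mem hu, Mr_of_mem (Γ := Γ) hu]

/-- The occupation measure. -/
def nu (Γ : ℝ → Set ℝ) (R : Set ℝ) : Measure ℝ := volume.withDensity (Ff Γ R)

/-- The time to travel from `kbar` to `x`. -/
def tau (Γ : ℝ → Set ℝ) (kbar : ℝ) (R : Set ℝ) (x : ℝ) : ℝ≥0∞ :=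
  nu Γ R (Icc kbar x)

lemma nu_null (hs : volume s = 0) : nu Γ R s = 0 :=
  (withDensity_absolutelyContinuous volume (Ff Γ R)) hs

lemma tau_self : tau Γ kbar R kbar = 0 := by
  have : volume (Icc kbar kbar) = 0 := by simp
  exact nu_null this

lemma tau_mono (h : x ≤ y) : tau Γ kbar R x ≤ tau Γ kbar R y :=
  measure_mono (Icc_subset_Icc_right h)

lemma tau_add (hx : kbar ≤ x) (hy : x ≤ y) :
    tau Γ kbar R y = tau Γ kbar R x + nu Γ R (Ioc x y) := by
  rw [tau, tau, ← Icc_union_Ioc_eq_Icc hx hy]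
  exact measure_union (fun s hs1 hs2 u hu => ((hs2 hu).1.not_ge (hs1 hu).2).elim)
    measurableSet_Ioc


lemma nu_Ioc_le (hS : Setup Γ kbar R) (hl : 0 < l) (hxy : x ≤ y)
    (hb : ∀ u ∈ Ioo x y, u ∈ R ∧ l ≤ Mf Γ u) :
    nu Γ R (Ioc x y) ≤ ENNReal.ofReal ((y - x) / l) := by
  have h1 : nu Γ R (Ioc x y) ≤ nu Γ R (Ioo x y) + nu Γ R {y} := by
    refine le_trans (measure_mono ?_) (measure_union_le _ _)
    intro u hu
    rcases lt_or_eq_of_le hu.2 with h | h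
    · exact Or.inl ⟨hu.1, h⟩
    · exact Or.inr h
  have h2 : nu Γ R {y} = 0 := nu_null (by simp)
  rw [h2, add_zero] at h1
  refine h1.trans ?_
  have h3 : nu Γ R (Ioo x y) = ∫⁻ u in Ioo x y, Ff Γ R u :=
    withDensity_apply _ measurableSet_Ioo
  rw [h3]
  calc ∫⁻ u in Ioo x y, Ff Γ R u ≤ ∫⁻ _ in Ioo x y, ENNReal.ofReal l⁻¹ := by
        refine setLIntegral_mono measurable_const (fun u hu => ?_)
        rw [Ff_eq (hb u hu).1]
        exact ENNReal.ofReal_le_ofReal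
          (inv_anti₀ hl (hb u hu).2)
    _ = ENNReal.ofReal l⁻¹ * volume (Ioo x y) := setLIntegral_const _ _
    _ = ENNReal.ofReal ((y - x) / l) := by
        rw [Real.volume_Ioo, ← ENNReal.ofReal_mul (by positivity)]
        congr 1
        rw [div_eq_inv_mul]

lemma nu_Ioc_ge (hS : Setup Γ kbar R) (hG : 0 < G) (hxy : x ≤ y)
    (hb : ∀ u ∈ Ioo x y, u ∈ R ∧ 0 < Mf Γ u ∧ Mf Γ u ≤ G) :
    ENNReal.ofReal ((y - x) / G) ≤ nu Γ R (Ioc x y) := by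
  have h1 : nu Γ R (Ioo x y) ≤ nu Γ R (Ioc x y) := measure_mono Ioo_subset_Ioc_self
  refine le_trans ?_ h1
  have h3 : nu Γ R (Ioo x y) = ∫⁻ u in Ioo x y, Ff Γ R u :=
    withDensity_apply _ measurableSet_Ioo
  rw [h3]
  calc ENNReal.ofReal ((y - x) / G) = ENNReal.ofReal G⁻¹ * volume (Ioo x y) := by
        rw [Real.volume_Ioo, ← ENNReal.ofReal_mul (by positivity)]
        congr 1
        rw [div_eq_inv_mul]
    _ = ∫⁻ _ in Ioo x y, ENNReal.ofReal G⁻¹ := (setLIntegral_const _ _).symm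
    _ ≤ ∫⁻ u in Ioo x y, Ff Γ R u := by
        refine setLIntegral_mono (measurable_Ff hS) (fun u hu => ?_)
        rw [Ff_eq (hb u hu).1]
        exact ENNReal.ofReal_le_ofReal
          (inv_anti₀ (hb u hu).2.1 (hb u hu).2.2)

/-- `Mf` is bounded above on initial segments of `R`. -/
lemma bound_on_Icc (hS : Setup Γ kbar R) (hz : z ∈ R) :
    ∃ G, 0 < G ∧ ∀ u ∈ Icc kbar z, Mf Γ u ≤ G := by
  have hK : IsCompact (Icc kbar z) := isCompact_Icc
  have hsub : Icc kbar z ⊆ R := hS.Icc_subset hz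
  obtain ⟨t, ht1, ht2⟩ := hK.elim_nhds_subcover
    (fun x => {y | y ∈ R → Mf Γ y < Mf Γ x + 1})
    (fun x hx => Mf_lt_eventually hS (hsub hx) (lt_add_one _))
  classical
  refine ⟨1 + ∑ x ∈ t, |Mf Γ x + 1|, by positivity, ?_⟩
  intro u hu
  obtain ⟨x, hxt, hx⟩ := by
    have := ht2 hu
    simpa using this
  have h1 : Mf Γ u < Mf Γ x + 1 := hx (hsub hu)
  have h2 : Mf Γ x + 1 ≤ |Mf Γ x + 1| := le_abs_self _
  have h3 : |Mf Γ x + 1| ≤ ∑ y ∈ t, |Mf Γ y + 1| :=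
    Finset.single_le_sum (f := fun y => |Mf Γ y + 1|) (fun i _ => abs_nonneg _) hxt
  linarith


/-- The sublevel set of `tau`. -/
def Aset (Γ : ℝ → Set ℝ) (kbar : ℝ) (R : Set ℝ) (t : ℝ) : Set ℝ :=
  {x | x ∈ R ∧ tau Γ kbar R x ≤ ENNReal.ofReal t}

/-- The candidate solution. -/
def ksol (Γ : ℝ → Set ℝ) (kbar : ℝ) (R : Set ℝ) (t : ℝ) : ℝ :=
  sSup (Aset Γ kbar R t)

/-- Capping hypothesis: each `Aset` is bounded above by an element of `R`. -/
def Cap (Γ : ℝ → Set ℝ) (kbar : ℝ) (R : Set ℝ) : Prop :=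
  ∀ t : ℝ, ∃ z ∈ R, ∀ a ∈ Aset Γ kbar R t, a ≤ z

lemma kbar_mem_Aset (hS : Setup Γ kbar R) (t : ℝ) : kbar ∈ Aset Γ kbar R t :=
  ⟨hS.mem, by rw [tau_self]; exact zero_le⟩

lemma Aset_nonempty (hS : Setup Γ kbar R) (t : ℝ) : (Aset Γ kbar R t).Nonempty :=
  ⟨kbar, kbar_mem_Aset hS t⟩

lemma Aset_bddAbove (hC : Cap Γ kbar R) (t : ℝ) : BddAbove (Aset Γ kbar R t) := by
  obtain ⟨z, _, hz⟩ := hC t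
  exact ⟨z, hz⟩

lemma ksol_lb (hS : Setup Γ kbar R) (hC : Cap Γ kbar R) (t : ℝ) :
    kbar ≤ ksol Γ kbar R t :=
  le_csSup (Aset_bddAbove hC t) (kbar_mem_Aset hS t)

lemma ksol_mem_R (hS : Setup Γ kbar R) (hC : Cap Γ kbar R) (t : ℝ) :
    ksol Γ kbar R t ∈ R := by
  obtain ⟨z, hzR, hz⟩ := hC t
  have h1 : ksol Γ kbar R t ≤ z := csSup_le (Aset_nonempty hS t) hz
  exact hS.Icc_subset hzR ⟨ksol_lb hS hC t, h1⟩

lemma ksol_mono (hS : Setup Γ kbar R) (hC : Cap Γ kbar R) :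
    Monotone (ksol Γ kbar R) := by
  intro s t hst
  refine csSup_le_csSup (Aset_bddAbove hC t) (Aset_nonempty hS s) (fun a ha => ?_)
  exact ⟨ha.1, ha.2.trans (ENNReal.ofReal_le_ofReal hst)⟩

lemma le_ksol (hC : Cap Γ kbar R) (ha : a ∈ Aset Γ kbar R t) : a ≤ ksol Γ kbar R t :=
  le_csSup (Aset_bddAbove hC t) ha

lemma tau_gt_of_ksol_lt (hC : Cap Γ kbar R) (hy : y ∈ R)
    (h : ksol Γ kbar R t < y) : ENNReal.ofReal t < tau Γ kbar R y := by
  by_contra hc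
  exact absurd (le_ksol hC ⟨hy, not_lt.1 hc⟩) (not_le.2 h)

/-- Positivity of travel times. -/
lemma tau_pos (hS : Setup Γ kbar R) (hx : x ∈ R) (hkx : kbar < x) :
    0 < tau Γ kbar R x := by
  obtain ⟨G, hG, hGb⟩ := bound_on_Icc hS hx
  have h1 : ENNReal.ofReal ((x - kbar) / G) ≤ nu Γ R (Ioc kbar x) := by
    refine nu_Ioc_ge hS hG (le_of_lt hkx) (fun u hu => ?_)
    have huR : u ∈ R := hS.Icc_subset hx ⟨le_of_lt hu.1, le_of_lt hu.2⟩
    refine ⟨huR, ?_, hGb u ⟨le_of_lt hu.1, le_of_lt hu.2⟩⟩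
    exact lt_of_lt_of_le (hS.mf_pos huR ⟨x, hx, hu.2⟩) (mf_le_Mf (hS.props u huR))
  have h2 : tau Γ kbar R x = tau Γ kbar R kbar + nu Γ R (Ioc kbar x) :=
    tau_add le_rfl (le_of_lt hkx)
  rw [h2, tau_self, zero_add]
  refine lt_of_lt_of_le ?_ h1
  rw [ENNReal.ofReal_pos]
  exact div_pos (by linarith) hG

lemma ksol_of_nonpos (hS : Setup Γ kbar R) (hC : Cap Γ kbar R) (ht : t ≤ 0) :
    ksol Γ kbar R t = kbar := by
  refine le_antisymm (csSup_le (Aset_nonempty hS t) (fun a ha => ?_)) (ksol_lb hS hC t)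
  by_contra hc
  have h1 : 0 < tau Γ kbar R a := tau_pos hS ha.1 (lt_of_not_ge hc)
  have h2 : tau Γ kbar R a ≤ 0 := by
    refine le_trans ha.2 ?_
    simp [ENNReal.ofReal_of_nonpos ht]
  exact absurd h2 (not_le.2 h1)

lemma ksol_zero (hS : Setup Γ kbar R) (hC : Cap Γ kbar R) : ksol Γ kbar R 0 = kbar :=
  ksol_of_nonpos hS hC le_rfl

/-- Key closedness: `tau (ksol t) ≤ t`. -/
lemma tau_ksol_le (hS : Setup Γ kbar R) (hC : Cap Γ kbar R) (t : ℝ) :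
    tau Γ kbar R (ksol Γ kbar R t) ≤ ENNReal.ofReal t := by
  set x := ksol Γ kbar R t with hx
  have hxlb : kbar ≤ x := ksol_lb hS hC t
  rcases eq_or_lt_of_le hxlb with h | h
  · rw [← h, tau_self]; exact zero_le
  · -- every point strictly below x has tau ≤ t
    have hlt : ∀ a, kbar ≤ a → a < x → tau Γ kbar R a ≤ ENNReal.ofReal t := by
      intro a _ hax
      obtain ⟨a', ha', haa'⟩ := exists_lt_of_lt_csSup (Aset_nonempty hS t) hax
      exact le_trans (tau_mono (le_of_lt haa')) ha'.2
    -- tau x = nu (Icc kbar x) ≤ nu (Ico kbar x) + nu {x} = nu (Ico kbar x)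
    have h1 : tau Γ kbar R x ≤ nu Γ R (Ico kbar x) := by
      have : nu Γ R (Icc kbar x) ≤ nu Γ R (Ico kbar x) + nu Γ R {x} := by
        refine le_trans (measure_mono ?_) (measure_union_le _ _)
        intro u hu
        rcases lt_or_eq_of_le hu.2 with h' | h'
        · exact Or.inl ⟨hu.1, h'⟩
        · exact Or.inr h'
      rw [show nu Γ R {x} = 0 from nu_null (by simp), add_zero] at this
      exact this
    refine h1.trans ?_
    -- Ico kbar x = ⋃ n, Icc kbar (x - (x - kbar)/(n+1))
    have hunion : Ico kbar x = ⋃ n : ℕ, Icc kbar (x - (x - kbar) / (n + 1)) := by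
      ext u
      simp only [mem_Ico, mem_iUnion, mem_Icc]
      constructor
      · rintro ⟨h1', h2'⟩
        obtain ⟨n, hn⟩ := exists_nat_gt ((x - kbar) / (x - u))
        refine ⟨n, h1', ?_⟩
        have hxu : 0 < x - u := by linarith
        have hn1 : (x - kbar) / (x - u) < n + 1 := hn.trans (lt_add_one _)
        have : (x - kbar) / (n + 1) < x - u := by
          rw [div_lt_iff₀ hxu] at hn1
          rw [div_lt_iff₀ (by positivity : (0:ℝ) < (n:ℝ)+1)]
          nlinarith [hn1]
        linarith
      · rintro ⟨n, h1', h2'⟩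
        have hpos : 0 < (x - kbar) / ((n:ℝ) + 1) := div_pos (by linarith) (by positivity)
        exact ⟨h1', by linarith⟩
    rw [hunion]
    have hmono : Monotone (fun n : ℕ => Icc kbar (x - (x - kbar) / (n + 1))) := by
      intro n m hnm
      refine Icc_subset_Icc_right ?_
      have hcn : (0:ℝ) < (n:ℝ) + 1 := by positivity
      have hb : ((n:ℝ)) + 1 ≤ (m:ℝ) + 1 := by
        have : ((n:ℝ)) ≤ (m:ℝ) := Nat.cast_le.2 hnm
        linarith
      have := div_le_div_of_nonneg_left (by linarith : (0:ℝ) ≤ x - kbar) hcn hb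
      linarith
    rw [hmono.directed_le.measure_iUnion]
    refine iSup_le (fun n => ?_)
    rcases le_or_gt (x - (x - kbar) / (n + 1)) kbar with hc | hc
    · refine le_trans (measure_mono (Icc_subset_Icc_right hc)) ?_
      rw [← tau]
      rw [tau_self]; exact zero_le
    · have hpos : 0 < (x - kbar) / ((n:ℝ) + 1) := div_pos (by linarith) (by positivity)
      exact hlt _ (le_of_lt hc) (by linarith)


/-- The fundamental Lipschitz estimate. -/
lemma ksol_sub_le (hS : Setup Γ kbar R) (hC : Cap Γ kbar R) (hs : 0 ≤ s) (hst : s ≤ t)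
    (hG : 0 < G) (hGb : ∀ u ∈ Icc kbar (ksol Γ kbar R t), Mf Γ u ≤ G) :
    ksol Γ kbar R t - ksol Γ kbar R s ≤ G * (t - s) := by
  set ks := ksol Γ kbar R s with hks
  set kt := ksol Γ kbar R t with hkt
  rcases le_or_gt kt ks with h | h
  · nlinarith
  have claim : ∀ y ∈ Ioo ks kt, kt - y ≤ G * (t - s) := by
    intro y hy
    have hkbky : kbar ≤ y := le_trans (ksol_lb hS hC s) (le_of_lt hy.1)
    have hyR : y ∈ R := hS.Icc_subset (ksol_mem_R hS hC t) ⟨hkbky, le_of_lt hy.2⟩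
    have h1 : ENNReal.ofReal s < tau Γ kbar R y := tau_gt_of_ksol_lt hC hyR hy.1
    have h2 : tau Γ kbar R kt = tau Γ kbar R y + nu Γ R (Ioc y kt) :=
      tau_add hkbky (le_of_lt hy.2)
    have h3 : ENNReal.ofReal ((kt - y) / G) ≤ nu Γ R (Ioc y kt) := by
      refine nu_Ioc_ge hS hG (le_of_lt hy.2) (fun u hu => ?_)
      have huR : u ∈ R := hS.Icc_subset (ksol_mem_R hS hC t)
        ⟨le_trans hkbky (le_of_lt hu.1), le_of_lt hu.2⟩
      refine ⟨huR, ?_, hGb u ⟨le_trans hkbky (le_of_lt hu.1), le_of_lt hu.2⟩⟩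
      exact lt_of_lt_of_le (hS.mf_pos huR ⟨kt, ksol_mem_R hS hC t, hu.2⟩)
        (mf_le_Mf (hS.props u huR))
    have h4 : tau Γ kbar R kt ≤ ENNReal.ofReal t := tau_ksol_le hS hC t
    have h5 : ENNReal.ofReal s + ENNReal.ofReal ((kt - y) / G) < tau Γ kbar R kt := by
      rw [h2]
      exact lt_of_lt_of_le (ENNReal.add_lt_add_right ENNReal.ofReal_ne_top h1)
        (add_le_add_right h3 _)
    have h6 : ENNReal.ofReal (s + (kt - y) / G) ≤ ENNReal.ofReal t := by
      rw [ENNReal.ofReal_add hs (div_nonneg (by linarith [hy.2]) (le_of_lt hG))]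
      exact le_of_lt (lt_of_lt_of_le h5 h4)
    have h7 : s + (kt - y) / G ≤ t :=
      (ENNReal.ofReal_le_ofReal_iff (by linarith : (0:ℝ) ≤ t)).1 h6
    have := (div_le_iff₀ hG).1 (by linarith : (kt - y) / G ≤ t - s)
    linarith
  refine le_of_forall_pos_le_add (fun ε hε => ?_)
  set y := ks + min ε ((kt - ks) / 2) with hy
  have hy1 : y ∈ Ioo ks kt := by
    constructor
    · have : 0 < min ε ((kt - ks) / 2) := lt_min hε (by linarith)
      simp only [hy]; linarith
    · have h1 : min ε ((kt - ks) / 2) ≤ (kt - ks) / 2 := min_le_right _ _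
      simp only [hy]; linarith
  have h2 := claim y hy1
  have h3 : y - ks ≤ ε := by
    have : min ε ((kt - ks) / 2) ≤ ε := min_le_left _ _
    simp only [hy]; linarith
  linarith

lemma ksol_absContOn (hS : Setup Γ kbar R) (hC : Cap Γ kbar R) (ha : 0 ≤ a) (hab : a < b) :
    AbsContOn (ksol Γ kbar R) a b := by
  obtain ⟨G, hG, hGb⟩ := bound_on_Icc hS (ksol_mem_R hS hC b)
  intro ε hε
  refine ⟨ε / (G + 1), by positivity, ?_⟩
  intro n s t hst hdisj hsum
  have hterm : ∀ i, |ksol Γ kbar R (t i) - ksol Γ kbar R (s i)| ≤ G * (t i - s i) := by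
    intro i
    rw [abs_of_nonneg (sub_nonneg.2 (ksol_mono hS hC (hst i).2.1))]
    refine ksol_sub_le hS hC (le_trans ha (hst i).1) (hst i).2.1 hG (fun u hu => ?_)
    refine hGb u ⟨hu.1, le_trans hu.2 ?_⟩
    exact ksol_mono hS hC (hst i).2.2
  have h1 : ∑ i, |ksol Γ kbar R (t i) - ksol Γ kbar R (s i)| ≤ G * ∑ i, (t i - s i) := by
    rw [Finset.mul_sum]
    exact Finset.sum_le_sum (fun i _ => hterm i)
  have h2 : G * ∑ i, (t i - s i) < G * (ε / (G + 1)) :=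
    mul_lt_mul_of_pos_left hsum hG
  have h3 : G * (ε / (G + 1)) < ε := by
    rw [mul_comm, div_mul_eq_mul_div, div_lt_iff₀ (by linarith : (0:ℝ) < G + 1)]
    nlinarith
  linarith

/-- Lower bound on forward difference quotients. -/
lemma right_lower (hS : Setup Γ kbar R) (hC : Cap Γ kbar R) (ht₀ : 0 ≤ t₀)
    (hz : z ∈ R) (hx₀z : ksol Γ kbar R t₀ < z)
    (hlam : 0 < lam) (hlam2 : lam < mf Γ (ksol Γ kbar R t₀)) :
    ∃ h₀ > 0, ∀ h : ℝ, 0 < h → h ≤ h₀ →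
      ksol Γ kbar R t₀ + lam * h ≤ ksol Γ kbar R (t₀ + h) := by
  set x₀ := ksol Γ kbar R t₀ with hx₀
  have hx₀R : x₀ ∈ R := ksol_mem_R hS hC t₀
  obtain ⟨δ, hδ, hδb⟩ := Metric.eventually_nhds_iff.1 (lt_mf_eventually hS hx₀R hlam2)
  refine ⟨min (δ / (2 * lam)) ((z - x₀) / lam), lt_min (by positivity)
    (div_pos (by linarith) hlam), ?_⟩
  intro h hh hh0
  set y := x₀ + lam * h with hy
  have hyz : y ≤ z := by
    have : h ≤ (z - x₀) / lam := le_trans hh0 (min_le_right _ _)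
    have := (le_div_iff₀ hlam).1 this
    simp only [hy]; linarith
  have hyR : y ∈ R := hS.Icc_subset hz ⟨le_trans (ksol_lb hS hC t₀) (by nlinarith), hyz⟩
  have hlamh : 0 < lam * h := mul_pos hlam hh
  have hyd : tau Γ kbar R y ≤ ENNReal.ofReal (t₀ + h) := by
    have hadd : tau Γ kbar R y = tau Γ kbar R x₀ + nu Γ R (Ioc x₀ y) :=
      tau_add (ksol_lb hS hC t₀) (by simp only [hy]; linarith)
    have hnu : nu Γ R (Ioc x₀ y) ≤ ENNReal.ofReal ((y - x₀) / lam) := by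
      refine nu_Ioc_le hS hlam (by simp only [hy]; linarith) (fun u hu => ?_)
      have huR : u ∈ R := hS.Icc_subset hyR
        ⟨le_trans (ksol_lb hS hC t₀) (le_of_lt hu.1), le_of_lt hu.2⟩
      refine ⟨huR, ?_⟩
      have hlh : lam * h ≤ δ / 2 := by
        have h1 : h ≤ δ / (2 * lam) := le_trans hh0 (min_le_left _ _)
        have h2 : lam * h ≤ lam * (δ / (2 * lam)) :=
          mul_le_mul_of_nonneg_left h1 (le_of_lt hlam)
        have h3 : lam * (δ / (2 * lam)) = δ / 2 := by
          field_simp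
        linarith
      have hud : dist u x₀ < δ := by
        rw [Real.dist_eq, abs_of_pos (by linarith [hu.1] : (0:ℝ) < u - x₀)]
        have h2' : u < x₀ + lam * h := hu.2
        linarith
      exact le_of_lt (lt_of_lt_of_le (hδb hud huR) (mf_le_Mf (hS.props u huR)))
    have hyx : (y - x₀) / lam = h := by
      simp only [hy]
      field_simp
      ring
    calc tau Γ kbar R y = tau Γ kbar R x₀ + nu Γ R (Ioc x₀ y) := hadd
      _ ≤ ENNReal.ofReal t₀ + ENNReal.ofReal h := by
          refine add_le_add (tau_ksol_le hS hC t₀) ?_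
          rw [← hyx]; exact hnu
      _ = ENNReal.ofReal (t₀ + h) := (ENNReal.ofReal_add ht₀ (le_of_lt hh)).symm
  exact le_ksol hC ⟨hyR, hyd⟩

/-- Upper bound on forward difference quotients. -/
lemma right_upper (hS : Setup Γ kbar R) (hC : Cap Γ kbar R) (ht₀ : 0 ≤ t₀)
    (hz : z ∈ R) (hx₀z : ksol Γ kbar R t₀ < z)
    (hlam : Mf Γ (ksol Γ kbar R t₀) < lam) :
    ∃ h₀ > 0, ∀ h : ℝ, 0 < h → h ≤ h₀ →
      ksol Γ kbar R (t₀ + h) - ksol Γ kbar R t₀ ≤ lam * h := by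
  set x₀ := ksol Γ kbar R t₀ with hx₀
  have hx₀R : x₀ ∈ R := ksol_mem_R hS hC t₀
  have hlampos : 0 < lam :=
    lt_of_le_of_lt (le_of_lt (lt_of_lt_of_le (hS.mf_pos hx₀R ⟨z, hz, hx₀z⟩)
      (mf_le_Mf (hS.props _ hx₀R)))) hlam
  obtain ⟨δ, hδ, hδb⟩ := Metric.eventually_nhds_iff.1 (Mf_lt_eventually hS hx₀R hlam)
  refine ⟨δ / (4 * lam), by positivity, ?_⟩
  intro h hh hh0
  set kt := ksol Γ kbar R (t₀ + h) with hkt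
  rcases le_or_gt kt x₀ with hc | hc
  · nlinarith
  set y₂ := min kt (x₀ + δ / 2) with hy₂
  have hy₂R : y₂ ∈ R := by
    rcases min_cases kt (x₀ + δ / 2) with ⟨h1, _⟩ | ⟨h1, h2⟩
    · rw [hy₂, h1]; exact ksol_mem_R hS hC _
    · rw [hy₂, h1]
      exact hS.Icc_subset (ksol_mem_R hS hC (t₀ + h))
        ⟨le_trans (ksol_lb hS hC t₀) (by linarith), le_of_lt h2⟩
  have hx₀y₂ : x₀ < y₂ := lt_min hc (by linarith)
  have claimA : ∀ y ∈ Ioo x₀ y₂, y₂ - y ≤ lam * h := by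
    intro y hy
    have hykb : kbar ≤ y := le_trans (ksol_lb hS hC t₀) (le_of_lt hy.1)
    have hyR : y ∈ R := hS.Icc_subset hy₂R ⟨hykb, le_of_lt hy.2⟩
    have h1 : ENNReal.ofReal t₀ < tau Γ kbar R y := tau_gt_of_ksol_lt hC hyR hy.1
    have h2 : tau Γ kbar R y₂ = tau Γ kbar R y + nu Γ R (Ioc y y₂) :=
      tau_add hykb (le_of_lt hy.2)
    have h3 : ENNReal.ofReal ((y₂ - y) / lam) ≤ nu Γ R (Ioc y y₂) := by
      refine nu_Ioc_ge hS hlampos (le_of_lt hy.2) (fun u hu => ?_)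
      have huR : u ∈ R := hS.Icc_subset hy₂R
        ⟨le_trans hykb (le_of_lt hu.1), le_of_lt hu.2⟩
      have hultkt : u < kt := lt_of_lt_of_le hu.2 (min_le_left _ _)
      refine ⟨huR, lt_of_lt_of_le (hS.mf_pos huR ⟨kt, ksol_mem_R hS hC _, hultkt⟩)
        (mf_le_Mf (hS.props u huR)), ?_⟩
      have hud : dist u x₀ < δ := by
        rw [Real.dist_eq, abs_of_pos (by
          have := hy.1; have := hu.1; linarith : (0:ℝ) < u - x₀)]
        have : u < x₀ + δ / 2 := lt_of_lt_of_le hu.2 (min_le_right _ _)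
        linarith
      exact le_of_lt (hδb hud huR)
    have h4 : tau Γ kbar R y₂ ≤ ENNReal.ofReal (t₀ + h) :=
      le_trans (tau_mono (min_le_left _ _)) (tau_ksol_le hS hC (t₀ + h))
    have h5 : ENNReal.ofReal t₀ + ENNReal.ofReal ((y₂ - y) / lam) < tau Γ kbar R y₂ := by
      rw [h2]
      exact lt_of_lt_of_le (ENNReal.add_lt_add_right ENNReal.ofReal_ne_top h1)
        (add_le_add_right h3 _)
    have h6 : ENNReal.ofReal (t₀ + (y₂ - y) / lam) ≤ ENNReal.ofReal (t₀ + h) := by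
      rw [ENNReal.ofReal_add ht₀ (div_nonneg (by linarith [hy.2]) (le_of_lt hlampos))]
      exact le_of_lt (lt_of_lt_of_le h5 h4)
    have h7 : t₀ + (y₂ - y) / lam ≤ t₀ + h :=
      (ENNReal.ofReal_le_ofReal_iff (by linarith : (0:ℝ) ≤ t₀ + h)).1 h6
    have := (div_le_iff₀ hlampos).1 (by linarith : (y₂ - y) / lam ≤ h)
    linarith
  have hy₂b : y₂ - x₀ ≤ lam * h := by
    refine le_of_forall_pos_le_add (fun ε hε => ?_)
    set y := x₀ + min ε ((y₂ - x₀) / 2) with hy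
    have hy1 : y ∈ Ioo x₀ y₂ := by
      constructor
      · have : 0 < min ε ((y₂ - x₀) / 2) := lt_min hε (by linarith)
        simp only [hy]; linarith
      · have h1 : min ε ((y₂ - x₀) / 2) ≤ (y₂ - x₀) / 2 := min_le_right _ _
        simp only [hy]; linarith
    have h2 := claimA y hy1
    have h3 : y - x₀ ≤ ε := by
      have : min ε ((y₂ - x₀) / 2) ≤ ε := min_le_left _ _
      simp only [hy]; linarith
    linarith
  rcases min_cases kt (x₀ + δ / 2) with ⟨h1, _⟩ | ⟨h1, h2⟩
  · rw [hy₂, h1] at hy₂b; linarith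
  · exfalso
    rw [hy₂, h1] at hy₂b
    have hlh : lam * h ≤ δ / 4 := by
      have h3 : lam * h ≤ lam * (δ / (4 * lam)) :=
        mul_le_mul_of_nonneg_left hh0 (le_of_lt hlampos)
      have h4 : lam * (δ / (4 * lam)) = δ / 4 := by field_simp
      linarith
    linarith


/-- At a point of differentiability where the solution is still moving, the derivative
belongs to `Γ`. -/
lemma deriv_mem (hS : Setup Γ kbar R) (hC : Cap Γ kbar R) (ht₀ : 0 ≤ t₀)
    (hz : z ∈ R) (hx₀z : ksol Γ kbar R t₀ < z)
    (hd : DifferentiableAt ℝ (ksol Γ kbar R) t₀) :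
    ∃ d ∈ Γ (ksol Γ kbar R t₀), HasDerivAt (ksol Γ kbar R) d t₀ := by
  set x₀ := ksol Γ kbar R t₀ with hx₀
  have hx₀R : x₀ ∈ R := ksol_mem_R hS hC t₀
  set d := deriv (ksol Γ kbar R) t₀ with hdd
  have hder : HasDerivAt (ksol Γ kbar R) d t₀ := hd.hasDerivAt
  have htend : Tendsto (slope (ksol Γ kbar R) t₀) (𝓝[>] t₀) (𝓝 d) :=
    (hasDerivAt_iff_tendsto_slope.1 hder).mono_left
      (nhdsWithin_mono _ (fun y (hy : y ∈ Ioi t₀) => (ne_of_gt hy : y ≠ t₀)))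
  have hmfpos : 0 < mf Γ x₀ := hS.mf_pos hx₀R ⟨z, hz, hx₀z⟩
  have keyub : ∀ lam, Mf Γ x₀ < lam →
      ∀ᶠ y in 𝓝[>] t₀, slope (ksol Γ kbar R) t₀ y ≤ lam := by
    intro lam hlam
    obtain ⟨h₀, hh₀, hb⟩ := right_upper hS hC ht₀ hz hx₀z hlam
    rw [eventually_nhdsWithin_iff]
    filter_upwards [Metric.eventually_nhds_iff.2
      ⟨h₀, hh₀, fun y hy => hy⟩] with y hy hy'
    have hyt : t₀ < y := hy'
    have h1 : y - t₀ ≤ h₀ := by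
      rw [Real.dist_eq, abs_of_pos (by linarith)] at hy
      linarith
    have h2 := hb (y - t₀) (by linarith) h1
    have he : t₀ + (y - t₀) = y := by ring
    rw [he] at h2
    rw [slope_def_field, div_le_iff₀ (by linarith : (0:ℝ) < y - t₀)]
    linarith [h2]
  have keylb : ∀ lam, 0 < lam → lam < mf Γ x₀ →
      ∀ᶠ y in 𝓝[>] t₀, lam ≤ slope (ksol Γ kbar R) t₀ y := by
    intro lam hlam hlam2
    obtain ⟨h₀, hh₀, hb⟩ := right_lower hS hC ht₀ hz hx₀z hlam hlam2
    rw [eventually_nhdsWithin_iff]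
    filter_upwards [Metric.eventually_nhds_iff.2
      ⟨h₀, hh₀, fun y hy => hy⟩] with y hy hy'
    have hyt : t₀ < y := hy'
    have h1 : y - t₀ ≤ h₀ := by
      rw [Real.dist_eq, abs_of_pos (by linarith)] at hy
      linarith
    have h2 := hb (y - t₀) (by linarith) h1
    have : t₀ + (y - t₀) = y := by ring
    rw [this] at h2
    rw [slope_def_field, le_div_iff₀ (by linarith : (0:ℝ) < y - t₀)]
    nlinarith [h2]
  have hub : d ≤ Mf Γ x₀ := by
    by_contra hcon
    push_neg at hcon
    set lam := (Mf Γ x₀ + d) / 2 with hl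
    have h1 : Mf Γ x₀ < lam := by simp only [hl]; linarith
    have h2 : d ≤ lam := le_of_tendsto htend (keyub lam h1)
    simp only [hl] at h2; linarith
  have hlb : mf Γ x₀ ≤ d := by
    by_contra hcon
    push_neg at hcon
    set lam := (max d 0 + mf Γ x₀) / 2 with hl
    have hmax : max d 0 < mf Γ x₀ := max_lt hcon hmfpos
    have h1 : 0 < lam := by
      have : (0:ℝ) ≤ max d 0 := le_max_right _ _
      simp only [hl]; linarith
    have h2 : lam < mf Γ x₀ := by simp only [hl]; linarith
    have h3 : lam ≤ d := ge_of_tendsto htend (keylb lam h1 h2)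
    have h4 : d ≤ max d 0 := le_max_left _ _
    simp only [hl] at h3; linarith
  exact ⟨d, Icc_subset_Gamma (hS.props _ hx₀R) ⟨hlb, hub⟩, hder⟩

/-- Global-mode assembly. -/
theorem invGlobal (hS : Setup Γ kbar R) (hC : Cap Γ kbar R)
    (halt : (∃ b, IsGreatest R b ∧ 0 ∈ Γ b) ∨
      ∀ t : ℝ, 0 ≤ t → ∃ x ∈ R, ENNReal.ofReal t < tau Γ kbar R x) :
    ∃ k : ℝ → ℝ, SolvesInclOn Γ kbar k (Ici 0) ∧ ∀ t, 0 ≤ t → k t ∈ R := by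
  refine ⟨ksol Γ kbar R, ⟨?_, ksol_zero hS hC, ?_, ?_⟩, fun t _ => ksol_mem_R hS hC t⟩
  · exact fun a b ha _ hab => ksol_absContOn hS hC ha hab
  · intro t _
    exact lt_of_lt_of_le (hS.props kbar hS.mem).1 (ksol_lb hS hC t)
  · have hdiff := (ksol_mono hS hC).ae_differentiableAt
    rcases halt with ⟨b, hbg, hb0⟩ | hesc
    · have hnull : (volume : Measure ℝ) ({0} ∪ {(tau Γ kbar R b).toReal}) = 0 := by
        refine measure_union_null (by simp) (by simp)
      filter_upwards [hdiff, (measure_eq_zero_iff_ae_notMem (μ := volume)).1 hnull]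
        with t hdt hnt ht
      simp only [mem_union, mem_singleton_iff] at hnt
      push_neg at hnt
      have ht0 : 0 < t := lt_of_le_of_ne ht (fun h => hnt.1 h.symm)
      rcases lt_trichotomy (ENNReal.ofReal t) (tau Γ kbar R b) with hlt | heq | hgt
      · -- still moving
        have hkb : ksol Γ kbar R t < b := by
          have hle : ksol Γ kbar R t ≤ b :=
            csSup_le (Aset_nonempty hS t) (fun a ha => hbg.2 ha.1)
          rcases lt_or_eq_of_le hle with h | h
          · exact h
          · exfalso
            have h2 := tau_ksol_le hS hC t
            rw [h] at h2
            exact absurd (lt_of_lt_of_le hlt h2) (lt_irrefl _)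
        exact deriv_mem hS hC (le_of_lt ht0) hbg.1 hkb hdt
      · exact absurd (by rw [← heq, ENNReal.toReal_ofReal (le_of_lt ht0)]) hnt.2
      · -- constant tail
        have hbne : tau Γ kbar R b ≠ ⊤ := by
          intro hcon
          rw [hcon] at hgt
          exact absurd hgt (not_lt.2 le_top)
        have hconst : ∀ s, (tau Γ kbar R b).toReal < s → ksol Γ kbar R s = b := by
          intro s hs
          have h1 : tau Γ kbar R b ≤ ENNReal.ofReal s := by
            rw [← ENNReal.ofReal_toReal hbne]
            exact ENNReal.ofReal_le_ofReal (le_of_lt hs)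
          refine le_antisymm (csSup_le (Aset_nonempty hS s) (fun a ha => hbg.2 ha.1))
            (le_ksol hC ⟨hbg.1, h1⟩)
        have htlt : (tau Γ kbar R b).toReal < t := by
          have := ENNReal.toReal_mono ENNReal.ofReal_ne_top (le_of_lt hgt)
          rw [ENNReal.toReal_ofReal (le_of_lt ht0)] at this
          rcases lt_or_eq_of_le this with h | h
          · exact h
          · exact absurd h.symm hnt.2
        refine ⟨0, ?_, ?_⟩
        · rw [hconst t htlt]; exact hb0
        · have hev : ksol Γ kbar R =ᶠ[𝓝 t] fun _ => b := by
            filter_upwards [Ioi_mem_nhds htlt] with s hs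
            exact hconst s hs
          exact (hasDerivAt_const t b).congr_of_eventuallyEq hev
    · filter_upwards [hdiff, (measure_eq_zero_iff_ae_notMem (μ := volume)).1
        (show (volume : Measure ℝ) {0} = 0 by simp)] with t hdt hnt ht
      have ht0 : 0 < t := lt_of_le_of_ne ht (fun h => hnt (mem_singleton_iff.2 h.symm))
      obtain ⟨x, hxR, hx⟩ := hesc t ht
      have hkx : ksol Γ kbar R t < x := by
        by_contra hcon
        push_neg at hcon
        exact absurd (lt_of_lt_of_le hx (le_trans (tau_mono hcon) (tau_ksol_le hS hC t)))
          (lt_irrefl _)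
      exact deriv_mem hS hC (le_of_lt ht0) hxR hkx hdt

/-- Partial-mode assembly. -/
theorem invPartial (hS : Setup Γ kbar R) (hb : IsGreatest R b) (hbk : kbar < b)
    (hfin : tau Γ kbar R b ≠ ⊤) :
    ∃ k : ℝ → ℝ, ∃ T : ℝ, 0 < T ∧ T = (tau Γ kbar R b).toReal ∧
      SolvesInclOn Γ kbar k (Icc 0 T) ∧ (∀ t ∈ Icc (0:ℝ) T, k t ∈ R) ∧ k T = b := by
  have hC : Cap Γ kbar R := fun t => ⟨b, hb.1, fun a ha => hb.2 ha.1⟩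
  set T := (tau Γ kbar R b).toReal with hT
  have hTpos : 0 < T := ENNReal.toReal_pos (ne_of_gt (tau_pos hS hb.1 hbk)) hfin
  have hkT : ksol Γ kbar R T = b := by
    have h1 : tau Γ kbar R b ≤ ENNReal.ofReal T := by
      rw [hT, ENNReal.ofReal_toReal hfin]
    exact le_antisymm (csSup_le (Aset_nonempty hS T) (fun a ha => hb.2 ha.1))
      (le_ksol hC ⟨hb.1, h1⟩)
  refine ⟨ksol Γ kbar R, T, hTpos, rfl, ⟨?_, ksol_zero hS hC, ?_, ?_⟩,
    fun t _ => ksol_mem_R hS hC t, hkT⟩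
  · exact fun a b' ha _ hab => ksol_absContOn hS hC ha.1 hab
  · intro t ht
    exact lt_of_lt_of_le (hS.props kbar hS.mem).1 (ksol_lb hS hC t)
  · have hdiff := (ksol_mono hS hC).ae_differentiableAt
    filter_upwards [hdiff, (measure_eq_zero_iff_ae_notMem (μ := volume)).1
      (show (volume : Measure ℝ) ({0} ∪ {T}) = 0 from
        measure_union_null (by simp) (by simp))] with t hdt hnt ht
    simp only [mem_union, mem_singleton_iff] at hnt
    push_neg at hnt
    have ht0 : 0 < t := lt_of_le_of_ne ht.1 (fun h => hnt.1 h.symm)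
    have htT : t < T := lt_of_le_of_ne ht.2 hnt.2
    have hkb : ksol Γ kbar R t < b := by
      have hle : ksol Γ kbar R t ≤ b :=
        csSup_le (Aset_nonempty hS t) (fun a ha => hb.2 ha.1)
      rcases lt_or_eq_of_le hle with h | h
      · exact h
      · exfalso
        have h1 := tau_ksol_le hS hC t
        rw [h] at h1
        have h2 : tau Γ kbar R b ≤ ENNReal.ofReal t := h1
        have h3 : T ≤ t := by
          have := ENNReal.toReal_mono ENNReal.ofReal_ne_top h2
          rw [ENNReal.toReal_ofReal (le_of_lt ht0)] at this
          exact this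
        linarith
    exact deriv_mem hS hC (le_of_lt ht0) hb.1 hkb hdt


/-- Sign propagation along a zero-free interval. -/
lemma sign_forward (hprops : ∀ u ∈ Icc kbar x, Props Γ u)
    (hnz : ∀ u ∈ Icc kbar x, (0:ℝ) ∉ Γ u) (h0 : Γ kbar ⊆ Ioi 0) (hx : kbar ≤ x) :
    ∀ u ∈ Icc kbar x, Γ u ⊆ Ioi 0 := by
  -- continuity induction
  set s : Set ℝ := {y ∈ Icc kbar x | ∀ u ∈ Icc kbar y, Γ u ⊆ Ioi 0} with hs
  have hks : kbar ∈ s := by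
    refine ⟨⟨le_rfl, hx⟩, fun u hu => ?_⟩
    have : u = kbar := le_antisymm hu.2 hu.1
    rw [this]; exact h0
  have hbdd : BddAbove s := ⟨x, fun y hy => hy.1.2⟩
  set c := sSup s with hc
  have hcm : kbar ≤ c := le_csSup hbdd hks
  have hcx : c ≤ x := csSup_le ⟨kbar, hks⟩ (fun y hy => hy.1.2)
  have hPlt : ∀ u, kbar ≤ u → u < c → Γ u ⊆ Ioi 0 := by
    intro u hu huc
    obtain ⟨y, hy, hy2⟩ := exists_lt_of_lt_csSup ⟨kbar, hks⟩ huc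
    exact hy.2 u ⟨hu, le_of_lt hy2⟩
  have hsplit : ∀ u ∈ Icc kbar x, Γ u ⊆ Ioi 0 ∨ Γ u ⊆ Iio 0 := by
    intro u hu
    by_contra hcon
    push_neg at hcon
    obtain ⟨a, ha, ha2⟩ := not_subset.1 hcon.1
    obtain ⟨b', hb', hb2⟩ := not_subset.1 hcon.2
    have ha3 : a ≤ 0 := not_lt.1 (fun h => ha2 h)
    have hb3 : 0 ≤ b' := not_lt.1 (fun h => hb2 h)
    exact hnz u hu ((hprops u hu).2.2.2.1.ordConnected.out ha hb' ⟨ha3, hb3⟩)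
  have hPc : Γ c ⊆ Ioi 0 := by
    rcases hsplit c ⟨hcm, hcx⟩ with h | h
    · exact h
    · exfalso
      obtain ⟨δ, hδ, hδb⟩ := Metric.eventually_nhds_iff.1
        ((hprops c ⟨hcm, hcx⟩).2.2.2.2 (Iio 0) isOpen_Iio h)
      rcases eq_or_lt_of_le hcm with he | hlt
      · obtain ⟨a, ha⟩ := (hprops kbar ⟨le_rfl, hx⟩).2.1
        have := h0 ha
        rw [← he] at h
        exact absurd (h ha) (by simp only [mem_Iio]; linarith [mem_Ioi.1 this])
      · set u := max kbar (c - δ / 2) with hu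
        have hu1 : kbar ≤ u := le_max_left _ _
        have hu2 : u < c := max_lt hlt (by linarith)
        have hu3 : dist u c < δ := by
          rw [Real.dist_eq, abs_of_nonpos (by linarith [le_max_right kbar (c - δ/2)] : u - c ≤ 0)]
          have : c - δ / 2 ≤ u := le_max_right _ _
          linarith
        obtain ⟨a, ha⟩ := (hprops u ⟨hu1, le_trans (le_of_lt hu2) hcx⟩).2.1
        have h1 := hPlt u hu1 hu2 ha
        have h2 := hδb hu3 ha
        simp only [mem_Ioi] at h1
        simp only [mem_Iio] at h2
        linarith
  have hcs : c ∈ s := by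
    refine ⟨⟨hcm, hcx⟩, fun u hu => ?_⟩
    rcases lt_or_eq_of_le hu.2 with h | h
    · exact hPlt u hu.1 h
    · rw [h]; exact hPc
  have hcx2 : c = x := by
    by_contra hcon
    have hclt : c < x := lt_of_le_of_ne hcx hcon
    obtain ⟨δ, hδ, hδb⟩ := Metric.eventually_nhds_iff.1
      ((hprops c ⟨hcm, hcx⟩).2.2.2.2 (Ioi 0) isOpen_Ioi hPc)
    set y := min x (c + δ / 2) with hy
    have hy1 : c < y := lt_min hclt (by linarith)
    have hy2 : y ∈ Icc kbar x := ⟨le_trans hcm (le_of_lt hy1), min_le_left _ _⟩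
    have hys : y ∈ s := by
      refine ⟨hy2, fun u hu => ?_⟩
      rcases le_or_gt u c with h | h
      · exact hcs.2 u ⟨hu.1, h⟩
      · refine hδb ?_
        rw [Real.dist_eq, abs_of_pos (by linarith : (0:ℝ) < u - c)]
        have : u ≤ c + δ / 2 := le_trans hu.2 (min_le_right _ _)
        linarith
    exact absurd (le_csSup hbdd hys) (not_le.2 hy1)
  intro u hu
  rw [← hcx2] at hu
  exact hcs.2 u hu

/-- The core dichotomy: either a global solution exists, or solutions reach arbitrarily
high values of `D` in bounded time. -/
theorem core (Γ : ℝ → Set ℝ) (kbar : ℝ) (D : Set ℝ) (hmem : kbar ∈ D)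
    (hord : D.OrdConnected) (hlbD : ∀ x ∈ D, kbar ≤ x)
    (hprops : ∀ x ∈ D, Props Γ x) (hnomax : ∀ x ∈ D, ∃ y ∈ D, x < y)
    (hsign0 : Γ kbar ⊆ Ioi 0) :
    (∃ k : ℝ → ℝ, SolvesInclOn Γ kbar k (Ici 0) ∧ ∀ t, 0 ≤ t → k t ∈ D) ∨
    (∃ T₀ : ℝ, 0 < T₀ ∧ ∀ C : ℝ, (∃ x ∈ D, C ≤ x) →
      ∃ T : ℝ, ∃ k : ℝ → ℝ, 0 < T ∧ T ≤ T₀ ∧ SolvesInclOn Γ kbar k (Icc 0 T) ∧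
        (∀ t ∈ Icc (0:ℝ) T, k t ∈ D) ∧ C ≤ k T) := by
  classical
  by_cases hZ : ∃ x ∈ D, (0:ℝ) ∈ Γ x
  · -- a zero exists: stop there
    left
    set Z : Set ℝ := {x ∈ D | (0:ℝ) ∈ Γ x} with hZdef
    obtain ⟨z₀, hz₀D, hz₀⟩ := hZ
    have hZne : Z.Nonempty := ⟨z₀, hz₀D, hz₀⟩
    have hZbdd : BddBelow Z := ⟨kbar, fun y hy => hlbD y hy.1⟩
    set b := sInf Z with hb
    have hbk : kbar ≤ b := le_csInf hZne (fun y hy => hlbD y hy.1)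
    have hbz₀ : b ≤ z₀ := csInf_le hZbdd ⟨hz₀D, hz₀⟩
    have hbD : b ∈ D := hord.out hmem hz₀D ⟨hbk, hbz₀⟩
    have hb0 : (0:ℝ) ∈ Γ b := by
      by_contra hcon
      obtain ⟨δ, hδ, hδb⟩ := Metric.eventually_nhds_iff.1
        ((hprops b hbD).2.2.2.2 {(0:ℝ)}ᶜ (isOpen_compl_singleton)
          (fun a ha h0 => hcon (by rwa [mem_singleton_iff.1 h0] at ha)))
      obtain ⟨z, hz, hz2⟩ := exists_lt_of_csInf_lt hZne (by linarith : b < b + δ)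
      have hbz : b ≤ z := csInf_le hZbdd hz
      have : dist z b < δ := by
        rw [Real.dist_eq, abs_of_nonneg (by linarith)]
        linarith
      exact hδb this hz.2 rfl
    have hbkb : kbar < b := by
      rcases eq_or_lt_of_le hbk with h | h
      · exfalso; rw [← h] at hb0
        exact absurd (mem_Ioi.1 (hsign0 hb0)) (lt_irrefl _)
      · exact h
    -- setup on R = Icc kbar b
    have hnzIco : ∀ u, kbar ≤ u → u < b → (0:ℝ) ∉ Γ u := by
      intro u h1 h2 hcon
      have huD : u ∈ D := hord.out hmem hbD ⟨h1, le_of_lt h2⟩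
      exact absurd (csInf_le hZbdd ⟨huD, hcon⟩) (not_le.2 h2)
    have hsub : Icc kbar b ⊆ D := hord.out hmem hbD
    have hS : Setup Γ kbar (Icc kbar b) := by
      refine ⟨⟨le_rfl, le_of_lt hbkb⟩, ordConnected_Icc, fun x hx => hx.1,
        fun x hx => hprops x (hsub hx), ?_⟩
      intro x hx hlt
      obtain ⟨y, hy, hxy⟩ := hlt
      have hxb : x < b := lt_of_lt_of_le hxy hy.2
      refine sign_forward (x := x) (fun u hu => hprops u (hsub ⟨hu.1, le_trans hu.2 (le_of_lt hxb)⟩))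
        (fun u hu => hnzIco u hu.1 (lt_of_le_of_lt hu.2 hxb)) hsign0 hx.1 x ⟨hx.1, le_rfl⟩
    have hC : Cap Γ kbar (Icc kbar b) :=
      fun t => ⟨b, ⟨le_of_lt hbkb, le_rfl⟩, fun a ha => ha.1.2⟩
    obtain ⟨k, hk, hkR⟩ := invGlobal hS hC
      (Or.inl ⟨b, ⟨⟨le_of_lt hbkb, le_rfl⟩, fun y hy => hy.2⟩, hb0⟩)
    exact ⟨k, hk, fun t ht => hsub (hkR t ht)⟩
  · -- no zeros: Setup on D itself
    push_neg at hZ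
    have hsignD : ∀ x ∈ D, Γ x ⊆ Ioi 0 := by
      intro x hx
      refine sign_forward (x := x)
        (fun u hu => hprops u (hord.out hmem hx hu))
        (fun u hu => hZ u (hord.out hmem hx hu)) hsign0 (hlbD x hx) x ⟨hlbD x hx, le_rfl⟩
    have hS : Setup Γ kbar D :=
      ⟨hmem, hord, hlbD, hprops, fun x hx _ => hsignD x hx⟩
    by_cases hesc : ∀ t : ℝ, 0 ≤ t → ∃ x ∈ D, ENNReal.ofReal t < tau Γ kbar D x
    · left
      have hC : Cap Γ kbar D := by
        intro t
        rcases le_or_gt 0 t with ht | ht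
        · obtain ⟨x, hxD, hx⟩ := hesc t ht
          refine ⟨x, hxD, fun a ha => ?_⟩
          by_contra hcon
          push_neg at hcon
          exact absurd (lt_of_lt_of_le hx (le_trans (tau_mono (le_of_lt hcon)) ha.2))
            (lt_irrefl _)
        · refine ⟨kbar, hmem, fun a ha => ?_⟩
          by_contra hcon
          push_neg at hcon
          have h1 : 0 < tau Γ kbar D a := tau_pos hS ha.1 hcon
          have h2 : tau Γ kbar D a ≤ 0 := le_trans ha.2 (by
            simp [ENNReal.ofReal_of_nonpos (le_of_lt ht)])
          exact absurd h2 (not_le.2 h1)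
      obtain ⟨k, hk, hkR⟩ := invGlobal hS hC (Or.inr hesc)
      exact ⟨k, hk, hkR⟩
    · right
      push_neg at hesc
      obtain ⟨t₀, ht₀, hbound⟩ := hesc
      refine ⟨t₀ + 1, by linarith, ?_⟩
      intro C ⟨x₁, hx₁D, hx₁C⟩
      obtain ⟨x₂, hx₂D, hx₂⟩ := hnomax kbar hmem
      set xb := max x₁ x₂ with hxb
      have hxbD : xb ∈ D := by
        rcases max_cases x₁ x₂ with ⟨h1, _⟩ | ⟨h1, _⟩ <;> rw [hxb, h1]
        · exact hx₁D
        · exact hx₂D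
      have hxbk : kbar < xb := lt_of_lt_of_le hx₂ (le_max_right _ _)
      -- set up on Icc kbar xb
      have hsub : Icc kbar xb ⊆ D := hord.out hmem hxbD
      have hS' : Setup Γ kbar (Icc kbar xb) := by
        refine ⟨⟨le_rfl, le_of_lt hxbk⟩, ordConnected_Icc, fun x hx => hx.1,
          fun x hx => hprops x (hsub hx), fun x hx _ => hsignD x (hsub hx)⟩
      -- compare tau on the smaller region with tau on D
      have htle : tau Γ kbar (Icc kbar xb) xb ≤ tau Γ kbar D xb := by
        rw [tau, tau, nu, nu, withDensity_apply _ measurableSet_Icc,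
          withDensity_apply _ measurableSet_Icc]
        refine lintegral_mono (fun u => ?_)
        by_cases hu : u ∈ Icc kbar xb
        · rw [Ff_eq hu, Ff_eq (hsub hu)]
        · simp [Ff, indicator_of_notMem hu]
      have hfin : tau Γ kbar (Icc kbar xb) xb ≠ ⊤ := by
        intro hcon
        have := le_trans (le_of_eq hcon.symm) (le_trans htle (hbound xb hxbD))
        simp at this
      obtain ⟨k, T, hT, hTeq, hsol, hkmem, hkT⟩ :=
        invPartial hS' ⟨⟨le_of_lt hxbk, le_rfl⟩, fun y hy => hy.2⟩ hxbk hfin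
      refine ⟨T, k, hT, ?_, hsol, fun t ht => hsub (hkmem t ht), ?_⟩
      · rw [hTeq]
        have h1 := le_trans htle (hbound xb hxbD)
        have := ENNReal.toReal_mono ENNReal.ofReal_ne_top h1
        rw [ENNReal.toReal_ofReal ht₀] at this
        linarith
      · rw [hkT]
        exact le_trans hx₁C (le_max_left _ _)


/-- Constant solutions at a zero of `Γ`. -/
lemma const_sol {Γ : ℝ → Set ℝ} {kbar : ℝ} (hkbar : 0 < kbar) (h0 : (0:ℝ) ∈ Γ kbar) :
    SolvesInclOn Γ kbar (fun _ => kbar) (Ici 0) := by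
  refine ⟨?_, rfl, fun t _ => hkbar, ?_⟩
  · intro a b _ _ _ ε hε
    refine ⟨1, one_pos, ?_⟩
    intro n s t _ _ _
    simpa using hε
  · refine Eventually.of_forall (fun t _ => ⟨0, h0, hasDerivAt_const t kbar⟩)

/-- Transporting solutions through the reflection `x ↦ A - x`. -/
lemma reflect_sol {Γ : ℝ → Set ℝ} {kbar A : ℝ} {k : ℝ → ℝ} {I : Set ℝ}
    (h : SolvesInclOn (fun x => -(Γ (A - x))) kbar k I) (hA : A = 2 * kbar)
    (hlt : ∀ t ∈ I, k t < A) :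
    SolvesInclOn Γ kbar (fun t => A - k t) I := by
  refine ⟨?_, by rw [h.init, hA]; ring, fun t ht => by
    have := hlt t ht; linarith, ?_⟩
  · intro a b ha hb hab ε hε
    obtain ⟨δ, hδ, hδb⟩ := h.locAC a b ha hb hab ε hε
    refine ⟨δ, hδ, ?_⟩
    intro n s t hst hdisj hsum
    have heq : ∀ i, |(A - k (t i)) - (A - k (s i))| = |k (t i) - k (s i)| := by
      intro i
      rw [show (A - k (t i)) - (A - k (s i)) = -(k (t i) - k (s i)) by ring, abs_neg]
    calc ∑ i, |(A - k (t i)) - (A - k (s i))| = ∑ i, |k (t i) - k (s i)| := by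
          exact Finset.sum_congr rfl (fun i _ => heq i)
      _ < ε := hδb n s t hst hdisj hsum
  · filter_upwards [h.hasDeriv] with t hder ht
    obtain ⟨d, hd, hder'⟩ := hder ht
    refine ⟨-d, ?_, ?_⟩
    · have : -d ∈ Γ (A - k t) := Set.mem_neg.1 hd
      exact this
    · have := (hasDerivAt_const t A).sub hder'; rwa [zero_sub] at this

end InclAux

/-- **Lemma 6.** A differential inclusion with a nonempty-, compact-, convex-valued upper
hemicontinuous right-hand side, whose solutions are uniformly sandwiched between two positive
continuous functions, has a global solution on `ℝ₊`. -/
theorem inclusion_global_solution (Γ : ℝ → Set ℝ) (kbar : ℝ) (hkbar : 0 < kbar)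
    (hne : ∀ x : ℝ, 0 < x → (Γ x).Nonempty)
    (hcomp : ∀ x : ℝ, 0 < x → IsCompact (Γ x))
    (hconv : ∀ x : ℝ, 0 < x → Convex ℝ (Γ x))
    (huhc : ∀ x : ℝ, 0 < x → ∀ O : Set ℝ, IsOpen O → Γ x ⊆ O → ∀ᶠ y in 𝓝 x, Γ y ⊆ O)
    (khi klo : ℝ → ℝ)
    (hconthi : ContinuousOn khi (Set.Ici 0)) (hcontlo : ContinuousOn klo (Set.Ici 0))
    (hpos : ∀ t : ℝ, 0 ≤ t → 0 < klo t ∧ 0 < khi t)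
    (hsandwich : ∀ T : ℝ, 0 < T → ∀ k : ℝ → ℝ, SolvesInclOn Γ kbar k (Set.Icc 0 T) →
      ∀ t ∈ Set.Icc (0:ℝ) T, klo t ≤ k t ∧ k t ≤ khi t) :
    ∃ k : ℝ → ℝ, SolvesInclOn Γ kbar k (Set.Ici 0) := by
  classical
  by_cases h0 : (0:ℝ) ∈ Γ kbar
  · exact ⟨fun _ => kbar, InclAux.const_sol hkbar h0⟩
  have hsplit : Γ kbar ⊆ Ioi 0 ∨ Γ kbar ⊆ Iio 0 := by
    by_contra hcon
    push_neg at hcon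
    obtain ⟨a, ha, ha2⟩ := not_subset.1 hcon.1
    obtain ⟨b', hb', hb2⟩ := not_subset.1 hcon.2
    have ha3 : a ≤ 0 := not_lt.1 (fun h => ha2 h)
    have hb3 : 0 ≤ b' := not_lt.1 (fun h => hb2 h)
    exact h0 ((hconv kbar hkbar).ordConnected.out ha hb' ⟨ha3, hb3⟩)
  rcases hsplit with hsign | hsign
  · -- increasing case
    have hcore := InclAux.core Γ kbar (Ici kbar) self_mem_Ici ordConnected_Ici
      (fun x hx => hx)
      (fun x hx => by
        have hxp : 0 < x := lt_of_lt_of_le hkbar hx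
        exact ⟨hxp, hne x hxp, hcomp x hxp, hconv x hxp, huhc x hxp⟩)
      (fun x hx => ⟨x + 1, le_trans hx (by linarith : x ≤ x + 1), by linarith⟩) hsign
    rcases hcore with ⟨k, hk, _⟩ | ⟨T₀, hT₀, hbad⟩
    · exact ⟨k, hk⟩
    · exfalso
      obtain ⟨m, hm, hmax⟩ := isCompact_Icc.exists_isMaxOn
        ⟨0, ⟨le_rfl, le_of_lt hT₀⟩⟩ (hconthi.mono (fun t (ht : t ∈ Icc (0:ℝ) T₀) => ht.1))
      obtain ⟨T, k, hTpos, hTle, hsol, _, hCk⟩ := hbad (khi m + 1)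
        ⟨max kbar (khi m + 1), mem_Ici.2 (le_max_left _ _), le_max_right _ _⟩
      have h1 := (hsandwich T hTpos k hsol T ⟨le_of_lt hTpos, le_rfl⟩).2
      have h2 : khi T ≤ khi m := hmax ⟨le_of_lt hTpos, hTle⟩
      linarith
  · -- decreasing case, via reflection
    set A := 2 * kbar with hA
    set Γr : ℝ → Set ℝ := fun x => -(Γ (A - x)) with hΓr
    have hrprops : ∀ x ∈ Ico kbar A, InclAux.Props Γr x := by
      intro x hx
      have hxp : 0 < x := lt_of_lt_of_le hkbar hx.1
      have hup : 0 < A - x := by simp only [hA] at hx ⊢; linarith [hx.2]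
      refine ⟨hxp, (hne _ hup).neg, (hcomp _ hup).neg, (hconv _ hup).neg, ?_⟩
      intro O hO hsub
      have hsub' : Γ (A - x) ⊆ -O := by
        intro a ha
        have : -a ∈ -(Γ (A - x)) := Set.neg_mem_neg.2 ha
        exact Set.mem_neg.1 (by simpa using hsub this)
      have hev := huhc (A - x) hup (-O) hO.neg hsub'
      have hcont : Tendsto (fun y : ℝ => A - y) (𝓝 x) (𝓝 (A - x)) :=
        (continuous_const.sub continuous_id).tendsto x
      filter_upwards [hcont.eventually hev] with y hy
      intro a ha
      have h1 : -a ∈ Γ (A - y) := Set.mem_neg.1 ha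
      have h2 : -a ∈ -O := hy h1
      simpa using Set.mem_neg.1 h2
    have hrsign : Γr kbar ⊆ Ioi 0 := by
      intro a ha
      have h1 : -a ∈ Γ (A - kbar) := Set.mem_neg.1 ha
      have h2 : A - kbar = kbar := by simp only [hA]; ring
      rw [h2] at h1
      have := hsign h1
      simp only [mem_Iio] at this
      simp only [mem_Ioi]; linarith
    have hcore := InclAux.core Γr kbar (Ico kbar A) ⟨le_rfl, by simp only [hA]; linarith⟩
      ordConnected_Ico (fun x hx => hx.1) hrprops
      (fun x hx => ⟨(x + A) / 2, ⟨le_trans hx.1 (by linarith [hx.2]), by linarith [hx.2]⟩,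
        by linarith [hx.2]⟩) hrsign
    rcases hcore with ⟨kr, hkr, hkrm⟩ | ⟨T₀, hT₀, hbad⟩
    · refine ⟨fun t => A - kr t, InclAux.reflect_sol hkr hA (fun t ht => (hkrm t ht).2)⟩
    · exfalso
      obtain ⟨m, hm, hmin⟩ := isCompact_Icc.exists_isMinOn
        ⟨0, ⟨le_rfl, le_of_lt hT₀⟩⟩ (hcontlo.mono (fun t (ht : t ∈ Icc (0:ℝ) T₀) => ht.1))
      set ε := klo m with hε
      have hεpos : 0 < ε := (hpos m hm.1).1
      obtain ⟨T, kr, hTpos, hTle, hsol, hmem, hCk⟩ := hbad (A - ε / 2)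
        ⟨max kbar (A - ε / 2), ⟨le_max_left _ _, by
          apply max_lt
          · simp only [hA]; linarith
          · simp only [hA]; linarith⟩, le_max_right _ _⟩
      have hrefl := InclAux.reflect_sol hsol hA (fun t ht => (hmem t ht).2)
      have h1 := (hsandwich T hTpos _ hrefl T ⟨le_of_lt hTpos, le_rfl⟩).1
      have h2 : ε ≤ klo T := hmin ⟨le_of_lt hTpos, hTle⟩
      have h3 : A - kr T ≤ ε / 2 := by linarith [hCk]
      linarith


end
end

section
/- Suppose Assumptions 1-4 hold and V : ℝ₊₊ → ℝ is concave. Then V is a viscosity solution to the HJB equation if and only if for every k > 0 and every p ∈ ∂V(k), sup_{c≥0}{F(k,c)·p + u(c,k)} = ρ·V(k). -/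
open MeasureTheory Real Set Filter Topology
open scoped ENNReal NNReal

noncomputable section

/- ## Auxiliary lemmas for Lemma 7 -/

private lemma subdiff_mono' {V : ℝ → ℝ} {x₁ x₂ p₁ p₂ : ℝ}
    (h₁ : p₁ ∈ subdiffOn V (Set.Ioi 0) x₁) (h₂ : p₂ ∈ subdiffOn V (Set.Ioi 0) x₂)
    (hx₁ : 0 < x₁) (hx₂ : 0 < x₂) (hlt : x₁ < x₂) : p₂ ≤ p₁ := by
  have a := h₁ x₂ (Set.mem_Ioi.2 hx₂)
  have b := h₂ x₁ (Set.mem_Ioi.2 hx₁)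
  nlinarith [a, b]

private lemma subdiff_of_tendsto' {V : ℝ → ℝ} {x pp : ℕ → ℝ} {k pl : ℝ}
    (hxk : Tendsto x atTop (𝓝 k)) (hppl : Tendsto pp atTop (𝓝 pl))
    (hVx : Tendsto (fun n => V (x n)) atTop (𝓝 (V k)))
    (hmem : ∀ n, pp n ∈ subdiffOn V (Set.Ioi 0) (x n)) :
    pl ∈ subdiffOn V (Set.Ioi 0) k := by
  intro y hy
  exact le_of_tendsto_of_tendsto' (tendsto_const_nhds.sub hVx)
    (hppl.mul (tendsto_const_nhds.sub hxk)) (fun n => hmem n y hy)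

private lemma touch_above_mem_subdiff {V φ : ℝ → ℝ} {k p δ : ℝ}
    (hV : ConcaveOn ℝ (Set.Ioi 0) V) (hk : 0 < k) (hδ : 0 < δ)
    (hball : Metric.ball k δ ⊆ Set.Ioi 0)
    (hd : HasDerivAt φ p k) (heq : φ k = V k)
    (hle : ∀ x ∈ Metric.ball k δ, V x ≤ φ x) :
    p ∈ subdiffOn V (Set.Ioi 0) k := by
  intro y hy
  rcases eq_or_ne y k with rfl | hne
  · simp
  have hd0 : y - k ≠ 0 := sub_ne_zero.2 hne
  have habs : 0 < |y - k| := abs_pos.2 hd0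
  set f : ℝ → ℝ := fun t => φ (k + t * (y - k)) with hf
  have hcomp : HasDerivAt f (p * (y - k)) 0 := by
    have h1 : HasDerivAt (fun t : ℝ => k + t * (y - k)) (y - k) 0 := by
      simpa using ((hasDerivAt_id (0:ℝ)).mul_const (y - k)).const_add k
    have h2 : HasDerivAt φ p (k + 0 * (y - k)) := by simpa using hd
    exact h2.comp 0 h1
  have hslope : Tendsto (slope f 0) (𝓝[>] (0:ℝ)) (𝓝 (p * (y - k))) :=
    (hasDerivAt_iff_tendsto_slope.1 hcomp).mono_left
      (nhdsWithin_mono 0 fun t (ht : t ∈ Set.Ioi (0:ℝ)) => ne_of_gt ht)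
  have hf0 : f 0 = V k := by simp [hf, heq]
  have hev : ∀ᶠ t in 𝓝[>] (0:ℝ), V y - V k ≤ slope f 0 t := by
    have hmm : Set.Ioo (0:ℝ) (min 1 (δ / |y - k|)) ∈ 𝓝[>] (0:ℝ) :=
      Ioo_mem_nhdsGT_of_mem ⟨le_refl 0, lt_min one_pos (div_pos hδ habs)⟩
    filter_upwards [hmm] with t ht
    obtain ⟨ht0, htm⟩ := ht
    have ht1 : t ≤ 1 := (lt_of_lt_of_le htm (min_le_left _ _)).le
    have htδ : t * |y - k| < δ := by
      have h3 : t < δ / |y - k| := lt_of_lt_of_le htm (min_le_right _ _)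
      calc t * |y - k| < (δ / |y - k|) * |y - k| := mul_lt_mul_of_pos_right h3 habs
        _ = δ := by field_simp
    have hzball : k + t * (y - k) ∈ Metric.ball k δ := by
      rw [Metric.mem_ball, Real.dist_eq]
      rw [show k + t * (y - k) - k = t * (y - k) by ring, abs_mul, abs_of_pos ht0]
      exact htδ
    have hconc := hV.2 (Set.mem_Ioi.2 hk) hy (by linarith : (0:ℝ) ≤ 1 - t) ht0.le (by ring)
    have hpt : (1 - t) • k + t • y = k + t * (y - k) := by simp only [smul_eq_mul]; ring
    rw [hpt] at hconc
    simp only [smul_eq_mul] at hconc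
    have hVφ : V (k + t * (y - k)) ≤ φ (k + t * (y - k)) := hle _ hzball
    rw [slope_def_field, sub_zero, hf0, le_div_iff₀ ht0]
    have hft : f t = φ (k + t * (y - k)) := rfl
    nlinarith [hconc, hVφ]
  exact ge_of_tendsto hslope hev

private lemma touch_below_mem_subdiff {V φ : ℝ → ℝ} {k p δ : ℝ}
    (hV : ConcaveOn ℝ (Set.Ioi 0) V) (hk : 0 < k) (hδ : 0 < δ)
    (hball : Metric.ball k δ ⊆ Set.Ioi 0)
    (hd : HasDerivAt φ p k) (heq : φ k = V k)
    (hle : ∀ x ∈ Metric.ball k δ, φ x ≤ V x) :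
    p ∈ subdiffOn V (Set.Ioi 0) k := by
  intro y hy
  rcases eq_or_ne y k with rfl | hne
  · simp
  have hd0 : y - k ≠ 0 := sub_ne_zero.2 hne
  have habs : 0 < |y - k| := abs_pos.2 hd0
  set f : ℝ → ℝ := fun t => φ (k - t * (y - k)) with hf
  have hcomp : HasDerivAt f (-(p * (y - k))) 0 := by
    have h1 : HasDerivAt (fun t : ℝ => k - t * (y - k)) (-(y - k)) 0 := by
      simpa using ((hasDerivAt_id (0:ℝ)).mul_const (y - k)).const_sub k
    have h2 : HasDerivAt φ p (k - 0 * (y - k)) := by simpa using hd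
    have h3 := h2.comp 0 h1
    have : p * -(y - k) = -(p * (y - k)) := by ring
    rw [this] at h3
    have h4 : (fun t : ℝ => φ (k - t * (y - k))) = φ ∘ (fun t : ℝ => k - t * (y - k)) := rfl
    simpa [hf, h4] using h3
  have hslope : Tendsto (fun t => -(slope f 0 t)) (𝓝[>] (0:ℝ)) (𝓝 (p * (y - k))) := by
    have := ((hasDerivAt_iff_tendsto_slope.1 hcomp).mono_left
      (nhdsWithin_mono 0 fun t (ht : t ∈ Set.Ioi (0:ℝ)) => ne_of_gt ht)).neg
    simpa using this
  have hf0 : f 0 = V k := by simp [hf, heq]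
  have hev : ∀ᶠ t in 𝓝[>] (0:ℝ), V y - V k ≤ -(slope f 0 t) := by
    have hmm : Set.Ioo (0:ℝ) (min 1 (δ / |y - k|)) ∈ 𝓝[>] (0:ℝ) :=
      Ioo_mem_nhdsGT_of_mem ⟨le_refl 0, lt_min one_pos (div_pos hδ habs)⟩
    filter_upwards [hmm] with t ht
    obtain ⟨ht0, htm⟩ := ht
    have htδ : t * |y - k| < δ := by
      have h3 : t < δ / |y - k| := lt_of_lt_of_le htm (min_le_right _ _)
      calc t * |y - k| < (δ / |y - k|) * |y - k| := mul_lt_mul_of_pos_right h3 habs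
        _ = δ := by field_simp
    have hzball : k - t * (y - k) ∈ Metric.ball k δ := by
      rw [Metric.mem_ball, Real.dist_eq]
      rw [show k - t * (y - k) - k = -(t * (y - k)) by ring, abs_neg, abs_mul, abs_of_pos ht0]
      exact htδ
    have hz : k - t * (y - k) ∈ Set.Ioi 0 := hball hzball
    have h1t : (0:ℝ) < 1 + t := by linarith
    have hconc := hV.2 hz hy (by positivity : (0:ℝ) ≤ 1/(1+t))
      (by positivity : (0:ℝ) ≤ t/(1+t)) (by field_simp)
    have hpt : (1/(1+t)) • (k - t * (y - k)) + (t/(1+t)) • y = k := by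
      simp only [smul_eq_mul]; field_simp; ring
    rw [hpt] at hconc
    simp only [smul_eq_mul] at hconc
    have hmul := mul_le_mul_of_nonneg_left hconc h1t.le
    have hexp : (1+t) * (1/(1+t) * V (k - t * (y - k)) + t/(1+t) * V y)
        = V (k - t * (y - k)) + t * V y := by field_simp
    rw [hexp] at hmul
    have hVφ : φ (k - t * (y - k)) ≤ V (k - t * (y - k)) := hle _ hzball
    rw [slope_def_field, sub_zero, hf0]
    have hgoal : -((f t - V k) / t) = (V k - f t) / t := by ring
    rw [hgoal, le_div_iff₀ ht0]
    have hft : f t = φ (k - t * (y - k)) := rfl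
    nlinarith [hmul, hVφ]
  exact ge_of_tendsto hslope hev

private lemma ham_le_of_tendsto' {ρ : ℝ} {u : ℝ → ℝ → EReal} {F : ℝ → ℝ → ℝ}
    (hucont : ContinuousOn (fun p : ℝ × ℝ => u p.1 p.2) posOrth)
    (hFcont : ContinuousOn (fun p : ℝ × ℝ => F p.1 p.2) posOrth)
    {x pp : ℕ → ℝ} {k pl : ℝ} {V : ℝ → ℝ}
    (hx0 : ∀ n, 0 < x n) (hk : 0 < k)
    (hxk : Tendsto x atTop (𝓝 k)) (hppl : Tendsto pp atTop (𝓝 pl))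
    (hVx : Tendsto (fun n => V (x n)) atTop (𝓝 (V k)))
    (hH : ∀ n, Ham u F (x n) (pp n) ≤ ((ρ * V (x n) : ℝ) : EReal)) :
    Ham u F k pl ≤ ((ρ * V k : ℝ) : EReal) := by
  rw [Ham]
  refine iSup_le ?_
  rintro ⟨c, hc⟩
  have hFt : Tendsto (fun n => F (x n) c) atTop (𝓝 (F k c)) := by
    have h1 : Tendsto (fun n => ((x n, c) : ℝ × ℝ)) atTop (𝓝[posOrth] (k, c)) :=
      tendsto_nhdsWithin_of_tendsto_nhds_of_eventually_within _
        (hxk.prodMk_nhds tendsto_const_nhds)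
        (Eventually.of_forall fun n => ⟨(hx0 n).le, hc⟩)
    exact ((hFcont (k, c) ⟨hk.le, hc⟩).tendsto).comp h1
  have hut : Tendsto (fun n => u c (x n)) atTop (𝓝 (u c k)) := by
    have h1 : Tendsto (fun n => ((c, x n) : ℝ × ℝ)) atTop (𝓝[posOrth] (c, k)) :=
      tendsto_nhdsWithin_of_tendsto_nhds_of_eventually_within _
        (tendsto_const_nhds.prodMk_nhds hxk)
        (Eventually.of_forall fun n => ⟨hc, (hx0 n).le⟩)
    exact ((hucont (c, k) ⟨hc, hk.le⟩).tendsto).comp h1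
  have hmul : Tendsto (fun n => ((F (x n) c * pp n : ℝ) : EReal)) atTop
      (𝓝 ((F k c * pl : ℝ) : EReal)) :=
    (continuous_coe_real_ereal.tendsto _).comp (hFt.mul hppl)
  have hadd : Tendsto (fun n => ((F (x n) c * pp n : ℝ) : EReal) + u c (x n)) atTop
      (𝓝 (((F k c * pl : ℝ) : EReal) + u c k)) := by
    have hca : ContinuousAt (fun q : EReal × EReal => q.1 + q.2)
        (((F k c * pl : ℝ) : EReal), u c k) :=
      EReal.continuousAt_add (Or.inl (EReal.coe_ne_top _)) (Or.inl (EReal.coe_ne_bot _))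
    exact hca.tendsto.comp (hmul.prodMk_nhds hut)
  have hrhs : Tendsto (fun n => ((ρ * V (x n) : ℝ) : EReal)) atTop
      (𝓝 ((ρ * V k : ℝ) : EReal)) :=
    (continuous_coe_real_ereal.tendsto _).comp (tendsto_const_nhds.mul hVx)
  refine le_of_tendsto_of_tendsto' hadd hrhs fun n => ?_
  refine le_trans ?_ (hH n)
  rw [Ham]
  exact le_iSup (fun c' : {c : ℝ // 0 ≤ c} =>
    ((F (x n) c'.1 * pp n : ℝ) : EReal) + u c'.1 (x n)) ⟨c, hc⟩

private lemma parabola_seq {ρ : ℝ} {u : ℝ → ℝ → EReal} {F : ℝ → ℝ → ℝ} {V : ℝ → ℝ}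
    (hV : ConcaveOn ℝ (Set.Ioi 0) V) (hVc : ContinuousOn V (Set.Ioi 0))
    (hsub : ∀ k : ℝ, 0 < k → ∀ φ : ℝ → ℝ, ∀ δ > (0:ℝ), Metric.ball k δ ⊆ Set.Ioi 0 →
      ContDiffOn ℝ 1 φ (Metric.ball k δ) → φ k = V k →
      (∀ x ∈ Metric.ball k δ, φ x ≤ V x) →
      Ham u F k (deriv φ k) ≤ ((ρ * V k : ℝ) : EReal))
    {k : ℝ} (hk : 0 < k) (q : ℝ) :
    ∃ (x : ℕ → ℝ) (N : ℕ), Tendsto x atTop (𝓝 k) ∧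
      (∀ n, x n ∈ Set.Icc (k/2) (3*k/2)) ∧
      ∀ n, N ≤ n → |x n - k| ≤ k/4 ∧
        (q - 2*(n:ℝ)*(x n - k)) ∈ subdiffOn V (Set.Ioi 0) (x n) ∧
        Ham u F (x n) (q - 2*(n:ℝ)*(x n - k)) ≤ ((ρ * V (x n) : ℝ) : EReal) := by
  have hIcc : Set.Icc (k/2) (3*k/2) ⊆ Set.Ioi 0 :=
    fun z hz => lt_of_lt_of_le (by linarith : (0:ℝ) < k/2) hz.1
  have hkmem : k ∈ Set.Icc (k/2) (3*k/2) := ⟨by linarith, by linarith⟩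
  have hGcont : ∀ n : ℕ, ContinuousOn
      (fun z => V z - q*(z-k) + (n:ℝ)*(z-k)^2) (Set.Icc (k/2) (3*k/2)) := fun n =>
    ((hVc.mono hIcc).sub (by fun_prop)).add (by fun_prop)
  choose x hxmem hxmin using fun n : ℕ =>
    isCompact_Icc.exists_isMinOn ⟨k, hkmem⟩ (hGcont n)
  obtain ⟨wmin, hwmem, hwmin⟩ :=
    isCompact_Icc.exists_isMinOn (s := Set.Icc (k/2) (3*k/2)) ⟨k, hkmem⟩ (hVc.mono hIcc)
  set K := V k - V wmin + |q| * k with hKdef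
  have habs2 : ∀ n, |x n - k| ≤ k/2 := by
    intro n; rw [abs_le]; obtain ⟨h1, h2⟩ := hxmem n; constructor <;> linarith
  have hKb : ∀ n : ℕ, (n:ℝ) * (x n - k)^2 ≤ K := by
    intro n
    have h1 := (isMinOn_iff.1 (hxmin n)) k hkmem
    have h1' : V (x n) - q*(x n - k) + (n:ℝ)*(x n - k)^2 ≤ V k := by
      simpa using h1
    have h2 : V wmin ≤ V (x n) := (isMinOn_iff.1 hwmin) _ (hxmem n)
    have h3 : q * (x n - k) ≤ |q| * (k/2) := by
      calc q * (x n - k) ≤ |q * (x n - k)| := le_abs_self _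
        _ = |q| * |x n - k| := abs_mul _ _
        _ ≤ |q| * (k/2) := mul_le_mul_of_nonneg_left (habs2 n) (abs_nonneg q)
    have h4 : (0:ℝ) ≤ |q| * k := mul_nonneg (abs_nonneg q) hk.le
    rw [hKdef]
    nlinarith [abs_nonneg q]
  have hxk : Tendsto x atTop (𝓝 k) := by
    rw [tendsto_iff_dist_tendsto_zero]
    simp only [Real.dist_eq]
    apply squeeze_zero' (g := fun n : ℕ => Real.sqrt (K / n))
      (Eventually.of_forall fun n => abs_nonneg _)
    · filter_upwards [eventually_ge_atTop 1] with n hn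
      have hn0 : (0:ℝ) < n := by exact_mod_cast hn
      have h4 : (x n - k)^2 ≤ K / n := by
        rw [le_div_iff₀ hn0]; nlinarith [hKb n]
      calc |x n - k| = Real.sqrt ((x n - k)^2) := (Real.sqrt_sq_eq_abs _).symm
        _ ≤ Real.sqrt (K / n) := Real.sqrt_le_sqrt h4
    · have h5 : Tendsto (fun n : ℕ => K / (n:ℝ)) atTop (𝓝 0) :=
        tendsto_const_div_atTop_nhds_zero_nat K
      have h6 := (Real.continuous_sqrt.tendsto 0).comp h5
      rw [Real.sqrt_zero] at h6
      exact h6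
  obtain ⟨N, hN⟩ := Metric.tendsto_atTop.1 hxk (k/4) (by linarith)
  refine ⟨x, N, hxk, hxmem, fun n hn => ?_⟩
  have h4 : |x n - k| ≤ k/4 := by
    have := hN n hn
    rw [Real.dist_eq] at this
    exact this.le
  have hxpos : 0 < x n := hIcc (hxmem n)
  have h5 := abs_le.1 h4
  have hb1 : Metric.ball (x n) (k/4) ⊆ Set.Icc (k/2) (3*k/2) := by
    intro z hz
    rw [Metric.mem_ball, Real.dist_eq] at hz
    have h6 := abs_lt.1 hz
    constructor <;> [linarith; linarith]
  have hb0 : Metric.ball (x n) (k/4) ⊆ Set.Ioi 0 := fun z hz => hIcc (hb1 hz)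
  set A := (n:ℝ) with hA
  set pn := q - 2*A*(x n - k) with hpn
  set φ : ℝ → ℝ :=
    fun z => q*(z-k) - A*(z-k)^2 + (V (x n) - (q*(x n - k) - A*(x n - k)^2)) with hφ
  have heq : φ (x n) = V (x n) := by simp only [hφ]; ring
  have hleφ : ∀ z ∈ Metric.ball (x n) (k/4), φ z ≤ V z := by
    intro z hz
    have h7 := (isMinOn_iff.1 (hxmin n)) z (hb1 hz)
    simp only [hφ]
    nlinarith [h7]
  have hder : HasDerivAt φ pn (x n) := by
    have h1 : HasDerivAt (fun z : ℝ => z - k) 1 (x n) := (hasDerivAt_id _).sub_const k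
    have h2 : HasDerivAt (fun z : ℝ => q * (z - k)) q (x n) := by
      simpa using h1.const_mul q
    have h3 : HasDerivAt (fun z : ℝ => A * (z - k)^2) (A * (2*(x n - k))) (x n) := by
      have := ((hasDerivAt_id (x n)).sub_const k).pow 2
      simpa using this.const_mul A
    have h8 := (h2.sub h3).add_const (V (x n) - (q*(x n - k) - A*(x n - k)^2))
    have h9 : q - A * (2*(x n - k)) = pn := by rw [hpn]; ring
    rw [h9] at h8
    exact h8
  have hcd : ContDiffOn ℝ 1 φ (Metric.ball (x n) (k/4)) := by
    apply ContDiff.contDiffOn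
    simp only [hφ]
    fun_prop
  have hHam := hsub (x n) hxpos φ (k/4) (by linarith) hb0 hcd heq hleφ
  rw [hder.deriv] at hHam
  have hsubd := touch_below_mem_subdiff hV hxpos (by linarith : (0:ℝ) < k/4) hb0 hder heq hleφ
  exact ⟨h4, hsubd, hHam⟩

set_option maxHeartbeats 1000000 in
private lemma limit_block {ρ : ℝ} {u : ℝ → ℝ → EReal} {F : ℝ → ℝ → ℝ} {V : ℝ → ℝ}
    (hucont : ContinuousOn (fun p : ℝ × ℝ => u p.1 p.2) posOrth)
    (hFcont : ContinuousOn (fun p : ℝ × ℝ => F p.1 p.2) posOrth)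
    (hVc : ContinuousOn V (Set.Ioi 0))
    {k : ℝ} (hk : 0 < k) {p : ℝ} (hp : p ∈ subdiffOn V (Set.Ioi 0) k)
    {x : ℕ → ℝ} {q : ℝ} {N : ℕ}
    (hxk : Tendsto x atTop (𝓝 k)) (hxmem : ∀ n, x n ∈ Set.Icc (k/2) (3*k/2))
    (hprop : ∀ n, N ≤ n → |x n - k| ≤ k/4 ∧
        (q - 2*(n:ℝ)*(x n - k)) ∈ subdiffOn V (Set.Ioi 0) (x n) ∧
        Ham u F (x n) (q - 2*(n:ℝ)*(x n - k)) ≤ ((ρ * V (x n) : ℝ) : EReal)) :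
    ∃ p₁ ∈ subdiffOn V (Set.Ioi 0) k,
      Ham u F k p₁ ≤ ((ρ * V k : ℝ) : EReal) ∧
      ((∀ᶠ n in atTop, k < x n) → p₁ ≤ p) ∧
      ((∀ᶠ n in atTop, x n < k) → p ≤ p₁) := by
  have hIcc : Set.Icc (k/2) (3*k/2) ⊆ Set.Ioi 0 :=
    fun z hz => lt_of_lt_of_le (by linarith : (0:ℝ) < k/2) hz.1
  have hkmem : k ∈ Set.Icc (k/2) (3*k/2) := ⟨by linarith, by linarith⟩
  have hx0 : ∀ n, 0 < x n := fun n => hIcc (hxmem n)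
  have hVxk : Tendsto (fun n => V (x n)) atTop (𝓝 (V k)) := by
    have h1 : Tendsto x atTop (𝓝[Set.Ioi 0] k) :=
      tendsto_nhdsWithin_of_tendsto_nhds_of_eventually_within _ hxk
        (Eventually.of_forall fun n => hx0 n)
    exact ((hVc k (Set.mem_Ioi.2 hk)).tendsto).comp h1
  obtain ⟨w1, hw1mem, hw1⟩ :=
    isCompact_Icc.exists_isMinOn (s := Set.Icc (k/2) (3*k/2)) ⟨k, hkmem⟩ (hVc.mono hIcc)
  obtain ⟨w2, hw2mem, hw2⟩ :=
    isCompact_Icc.exists_isMaxOn (s := Set.Icc (k/2) (3*k/2)) ⟨k, hkmem⟩ (hVc.mono hIcc)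
  set D := V w2 - V w1 with hDdef
  have hD0 : 0 ≤ D := sub_nonneg.2 ((isMinOn_iff.1 hw1) _ hw2mem)
  set C := 4*D/k + 1 with hCdef
  have hCk : C * k = 4*D + k := by rw [hCdef]; field_simp
  have hC0 : 0 < C := by positivity
  have hpb : ∀ n, N ≤ n → (q - 2*(n:ℝ)*(x n - k)) ∈ Set.Icc (-C) C := by
    intro n hn
    obtain ⟨h4, hsubd, _⟩ := hprop n hn
    set pn := q - 2*(n:ℝ)*(x n - k) with hpndef
    have h5 := abs_le.1 h4
    have hxl : k/2 < x n := by linarith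
    have hxr : x n < 3*k/2 := by linarith
    have hlow := hsubd (3*k/2) (Set.mem_Ioi.2 (by linarith))
    have hhigh := hsubd (k/2) (Set.mem_Ioi.2 (by linarith))
    have hVxn1 : V w1 ≤ V (x n) := (isMinOn_iff.1 hw1) _ (hxmem n)
    have hVxn2 : V (x n) ≤ V w2 := (isMaxOn_iff.1 hw2) _ (hxmem n)
    have hV32a : V w1 ≤ V (3*k/2) := (isMinOn_iff.1 hw1) _ ⟨by linarith, le_refl _⟩
    have hV12b : V (k/2) ≥ V w1 := (isMinOn_iff.1 hw1) _ ⟨le_refl _, by linarith⟩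
    have hd1 : k/4 ≤ 3*k/2 - x n := by linarith
    have hd2 : k/4 ≤ x n - k/2 := by linarith
    constructor
    · rcases le_or_gt 0 pn with h | h
      · linarith
      · -- hlow : V (3k/2) - V (x n) ≤ pn * (3k/2 - x n)
        have h7 : pn * (3*k/2 - x n) ≤ pn * (k/4) := by nlinarith
        have h8 : V w1 - V w2 ≤ pn * (k/4) := by
          calc V w1 - V w2 ≤ V (3*k/2) - V (x n) := by linarith
            _ ≤ pn * (3*k/2 - x n) := hlow
            _ ≤ pn * (k/4) := h7
        nlinarith [hCk]
    · rcases le_or_gt pn 0 with h | h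
      · linarith
      · -- hhigh : V (k/2) - V (x n) ≤ pn * (k/2 - x n)
        have h7 : pn * (k/4) ≤ pn * (x n - k/2) := by nlinarith
        have h8 : pn * (k/4) ≤ V w2 - V w1 := by
          calc pn * (k/4) ≤ pn * (x n - k/2) := h7
            _ ≤ V (x n) - V (k/2) := by nlinarith [hhigh]
            _ ≤ V w2 - V w1 := by linarith
        nlinarith [hCk]
  set P : ℕ → ℝ := fun m => q - 2*((m + N : ℕ):ℝ)*(x (m + N) - k) with hPdef
  have hPmem : ∀ m, P m ∈ Set.Icc (-C) C := fun m => hpb (m + N) (Nat.le_add_left N m)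
  obtain ⟨p₁, _, σ, hσ, hPσ⟩ := tendsto_subseq_of_bounded (Metric.isBounded_Icc _ _) hPmem
  have hshift : Tendsto (fun m => x (m + N)) atTop (𝓝 k) :=
    hxk.comp (tendsto_add_atTop_nat N)
  have hXσ : Tendsto (fun m => x (σ m + N)) atTop (𝓝 k) :=
    hshift.comp hσ.tendsto_atTop
  have hVXσ : Tendsto (fun m => V (x (σ m + N))) atTop (𝓝 (V k)) :=
    (hVxk.comp (tendsto_add_atTop_nat N)).comp hσ.tendsto_atTop
  have hPσ' : Tendsto (fun m => q - 2*((σ m + N : ℕ):ℝ)*(x (σ m + N) - k)) atTop (𝓝 p₁) := hPσ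
  have hprops : ∀ m, (q - 2*((σ m + N : ℕ):ℝ)*(x (σ m + N) - k)) ∈
      subdiffOn V (Set.Ioi 0) (x (σ m + N)) ∧
      Ham u F (x (σ m + N)) (q - 2*((σ m + N : ℕ):ℝ)*(x (σ m + N) - k)) ≤
        ((ρ * V (x (σ m + N)) : ℝ) : EReal) :=
    fun m => (hprop (σ m + N) (Nat.le_add_left N _)).2
  refine ⟨p₁, ?_, ?_, ?_, ?_⟩
  · exact subdiff_of_tendsto' hXσ hPσ' hVXσ fun m => (hprops m).1
  · exact ham_le_of_tendsto' hucont hFcont (fun m => hx0 _) hk hXσ hPσ' hVXσ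
      fun m => (hprops m).2
  · intro hgt
    have hgt' : ∀ᶠ m in atTop, k < x (σ m + N) :=
      ((tendsto_add_atTop_nat N).comp hσ.tendsto_atTop).eventually hgt
    refine le_of_tendsto hPσ' ?_
    filter_upwards [hgt'] with m hm
    exact subdiff_mono' hp (hprops m).1 hk (hx0 _) hm
  · intro hlt
    have hlt' : ∀ᶠ m in atTop, x (σ m + N) < k :=
      ((tendsto_add_atTop_nat N).comp hσ.tendsto_atTop).eventually hlt
    refine ge_of_tendsto hPσ' ?_
    filter_upwards [hlt'] with m hm
    exact subdiff_mono' (hprops m).1 hp (hx0 _) hk hm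

set_option maxHeartbeats 1600000 in
/-- **Lemma 7.** A concave `V` is a viscosity solution to the HJB equation iff the HJB equation
holds at every subgradient. -/
theorem viscosity_iff_subdifferential (ρ : ℝ) (W : Set (ℝ → ℝ)) (u : ℝ → ℝ → EReal)
    (F : ℝ → ℝ → ℝ)
    (hA1 : Assumption1 ρ W) (hA2 : Assumption2 u) (hA3 : Assumption3 W F)
    (hA4 : Assumption4 u) (V : ℝ → ℝ) (hV : ConcaveOn ℝ (Set.Ioi 0) V) :
    IsViscositySolution ρ u F V ↔
      ∀ k : ℝ, 0 < k → ∀ p ∈ subdiffOn V (Set.Ioi 0) k,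
        Ham u F k p = ((ρ * V k : ℝ) : EReal) := by
  have hVc : ContinuousOn V (Set.Ioi 0) := by
    have h1 := (hV.neg.continuousOn isOpen_Ioi).neg
    simpa using h1
  constructor
  · rintro ⟨hcont, ⟨husc, hsubs⟩, ⟨hlsc, hsups⟩⟩ k hk p hp
    refine le_antisymm ?_ ?_
    · -- Ham ≤ ρ V k : via two one-sided subgradient approximations
      -- side 1 : q₁ forces points to the right, p₁ ≤ p
      obtain ⟨x₁, N₁, hxk₁, hxmem₁, hprop₁⟩ := parabola_seq hV hVc hsubs hk
        ((V k - V (k/2))/(k - k/2) + 1)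
      have hVx₁ : Tendsto (fun n => V (x₁ n)) atTop (𝓝 (V k)) := by
        have h1 : Tendsto x₁ atTop (𝓝[Set.Ioi 0] k) :=
          tendsto_nhdsWithin_of_tendsto_nhds_of_eventually_within _ hxk₁
            (Eventually.of_forall fun n => lt_of_lt_of_le (by linarith) (hxmem₁ n).1)
        exact ((hVc k (Set.mem_Ioi.2 hk)).tendsto).comp h1
      have hR₁ : Tendsto (fun n => (V (x₁ n) - V (k/2))/(x₁ n - k/2)) atTop
          (𝓝 ((V k - V (k/2))/(k - k/2))) :=
        (hVx₁.sub tendsto_const_nhds).div (hxk₁.sub tendsto_const_nhds)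
          (by intro h; linarith [h] : k - k/2 ≠ 0)
      have hRlt : ∀ᶠ n in atTop,
          (V (x₁ n) - V (k/2))/(x₁ n - k/2) < (V k - V (k/2))/(k - k/2) + 1 :=
        hR₁.eventually_lt_const (by linarith)
      have hgt : ∀ᶠ n in atTop, k < x₁ n := by
        filter_upwards [hRlt, eventually_ge_atTop N₁] with n h1 h2
        obtain ⟨h4, hsubd, _⟩ := hprop₁ n h2
        by_contra hle'
        push_neg at hle'
        have h5 := abs_le.1 h4
        have hxl : k/2 < x₁ n := by linarith
        have hn0 : (0:ℝ) ≤ (n:ℝ) := Nat.cast_nonneg n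
        set q₁ := (V k - V (k/2))/(k - k/2) + 1 with hq₁def
        have hpn : q₁ ≤ q₁ - 2*(n:ℝ)*(x₁ n - k) := by nlinarith
        have h6 := hsubd (k/2) (Set.mem_Ioi.2 (by linarith))
        have h7 : (q₁ - 2*(n:ℝ)*(x₁ n - k)) * (x₁ n - k/2) ≤ V (x₁ n) - V (k/2) := by
          nlinarith [h6]
        have h8 : q₁ * (x₁ n - k/2) ≤ V (x₁ n) - V (k/2) :=
          le_trans (mul_le_mul_of_nonneg_right hpn (by linarith)) h7
        have h9 : V (x₁ n) - V (k/2) < q₁ * (x₁ n - k/2) := by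
          have := (div_lt_iff₀ (by linarith : (0:ℝ) < x₁ n - k/2)).1 h1
          linarith
        linarith
      obtain ⟨p₁, hp₁m, hp₁H, hp₁le, _⟩ :=
        limit_block hA2.cont hA3.cont hVc hk hp hxk₁ hxmem₁ hprop₁
      have hple₁ : p₁ ≤ p := hp₁le hgt
      -- side 2 : q₂ forces points to the left, p ≤ p₂
      obtain ⟨x₂, N₂, hxk₂, hxmem₂, hprop₂⟩ := parabola_seq hV hVc hsubs hk
        ((V (3*k/2) - V k)/(3*k/2 - k) - 1)
      have hVx₂ : Tendsto (fun n => V (x₂ n)) atTop (𝓝 (V k)) := by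
        have h1 : Tendsto x₂ atTop (𝓝[Set.Ioi 0] k) :=
          tendsto_nhdsWithin_of_tendsto_nhds_of_eventually_within _ hxk₂
            (Eventually.of_forall fun n => lt_of_lt_of_le (by linarith) (hxmem₂ n).1)
        exact ((hVc k (Set.mem_Ioi.2 hk)).tendsto).comp h1
      have hR₂ : Tendsto (fun n => (V (3*k/2) - V (x₂ n))/(3*k/2 - x₂ n)) atTop
          (𝓝 ((V (3*k/2) - V k)/(3*k/2 - k))) :=
        (tendsto_const_nhds.sub hVx₂).div (tendsto_const_nhds.sub hxk₂)
          (by intro h; linarith [h] : 3*k/2 - k ≠ 0)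
      have hRgt : ∀ᶠ n in atTop,
          (V (3*k/2) - V k)/(3*k/2 - k) - 1 < (V (3*k/2) - V (x₂ n))/(3*k/2 - x₂ n) :=
        hR₂.eventually_const_lt (by linarith)
      have hlt : ∀ᶠ n in atTop, x₂ n < k := by
        filter_upwards [hRgt, eventually_ge_atTop N₂] with n h1 h2
        obtain ⟨h4, hsubd, _⟩ := hprop₂ n h2
        by_contra hge'
        push_neg at hge'
        have h5 := abs_le.1 h4
        have hxr : x₂ n < 3*k/2 := by linarith
        have hn0 : (0:ℝ) ≤ (n:ℝ) := Nat.cast_nonneg n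
        set q₂ := (V (3*k/2) - V k)/(3*k/2 - k) - 1 with hq₂def
        have hpn : q₂ - 2*(n:ℝ)*(x₂ n - k) ≤ q₂ := by nlinarith
        have h6 := hsubd (3*k/2) (Set.mem_Ioi.2 (by linarith))
        have h7 : V (3*k/2) - V (x₂ n) ≤ (q₂ - 2*(n:ℝ)*(x₂ n - k)) * (3*k/2 - x₂ n) := h6
        have h8 : V (3*k/2) - V (x₂ n) ≤ q₂ * (3*k/2 - x₂ n) :=
          le_trans h7 (mul_le_mul_of_nonneg_right hpn (by linarith))
        have h9 : q₂ * (3*k/2 - x₂ n) < V (3*k/2) - V (x₂ n) := by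
          have := (lt_div_iff₀ (by linarith : (0:ℝ) < 3*k/2 - x₂ n)).1 h1
          linarith
        linarith
      obtain ⟨p₂, hp₂m, hp₂H, _, hp₂ge⟩ :=
        limit_block hA2.cont hA3.cont hVc hk hp hxk₂ hxmem₂ hprop₂
      have hpge₂ : p ≤ p₂ := hp₂ge hlt
      -- combine : affine interpolation in p
      rw [Ham]
      refine iSup_le ?_
      rintro ⟨c, hc⟩
      rcases le_or_gt 0 (F k c) with hF | hF
      · calc ((F k c * p : ℝ) : EReal) + u c k
            ≤ ((F k c * p₂ : ℝ) : EReal) + u c k :=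
              add_le_add_left
                (EReal.coe_le_coe_iff.2 (mul_le_mul_of_nonneg_left hpge₂ hF)) _
          _ ≤ Ham u F k p₂ := by
              rw [Ham]
              exact le_iSup (fun c' : {c : ℝ // 0 ≤ c} =>
                ((F k c'.1 * p₂ : ℝ) : EReal) + u c'.1 k) ⟨c, hc⟩
          _ ≤ _ := hp₂H
      · calc ((F k c * p : ℝ) : EReal) + u c k
            ≤ ((F k c * p₁ : ℝ) : EReal) + u c k :=
              add_le_add_left
                (EReal.coe_le_coe_iff.2 (mul_le_mul_of_nonpos_left hple₁ hF.le)) _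
          _ ≤ Ham u F k p₁ := by
              rw [Ham]
              exact le_iSup (fun c' : {c : ℝ // 0 ≤ c} =>
                ((F k c'.1 * p₁ : ℝ) : EReal) + u c'.1 k) ⟨c, hc⟩
          _ ≤ _ := hp₁H
    · -- ρ V k ≤ Ham : supersolution with the affine test function
      have hda : HasDerivAt (fun x => V k + p * (x - k)) p k := by
        simpa using (((hasDerivAt_id k).sub_const k).const_mul p).const_add (V k)
      have hbs : Metric.ball k k ⊆ Set.Ioi 0 := by
        intro z hz
        rw [Metric.mem_ball, Real.dist_eq] at hz
        have := abs_lt.1 hz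
        exact Set.mem_Ioi.2 (by linarith)
      have h := hsups k hk (fun x => V k + p * (x - k)) k hk hbs
        ((by fun_prop : ContDiff ℝ 1 (fun x : ℝ => V k + p * (x - k))).contDiffOn)
        (by simp) ?_
      · rw [hda.deriv] at h
        exact h
      · intro z hz
        have := hp z (hbs hz)
        linarith
  · intro hHJB
    refine ⟨hVc, ⟨hVc.upperSemicontinuousOn, ?_⟩, ⟨hVc.lowerSemicontinuousOn, ?_⟩⟩
    · intro k hk φ δ hδ hball hcd heq hle
      have hder : HasDerivAt φ (deriv φ k) k :=
        ((hcd.differentiableOn one_ne_zero).differentiableAt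
          (Metric.isOpen_ball.mem_nhds (Metric.mem_ball_self hδ))).hasDerivAt
      exact le_of_eq (hHJB k hk _ (touch_below_mem_subdiff hV hk hδ hball hder heq hle))
    · intro k hk φ δ hδ hball hcd heq hle
      have hder : HasDerivAt φ (deriv φ k) k :=
        ((hcd.differentiableOn one_ne_zero).differentiableAt
          (Metric.isOpen_ball.mem_nhds (Metric.mem_ball_self hδ))).hasDerivAt
      exact ge_of_eq (hHJB k hk _ (touch_above_mem_subdiff hV hk hδ hball hder heq hle))

end
end

section
/- Let U ⊆ ℝ be an open interval, H : U → ℝ concave, A < B, and x : [A,B] → U absolutely continuous, and set ψ(t) = H(x(t)). Then ψ is absolutely continuous on [A,B]. Moreover, if at some t both ψ̇(t) and ẋ(t) exist, then for every p ∈ ∂H(x(t)) one has ψ̇(t) = p·ẋ(t). -/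
open MeasureTheory Real Set Filter Topology
open scoped ENNReal NNReal

noncomputable section

/-- **Lemma 8.** The composition of a concave function with an absolutely continuous function is
absolutely continuous, and its derivative is given by the chain rule through any subgradient. -/
theorem concave_comp_absolutely_continuous (U : Set ℝ) (hUopen : IsOpen U)
    (hUconv : Convex ℝ U) (H : ℝ → ℝ) (hH : ConcaveOn ℝ U H)
    (A B : ℝ) (hAB : A < B) (x : ℝ → ℝ) (hmaps : ∀ t ∈ Set.Icc A B, x t ∈ U)
    (hx : AbsContOn x A B) :
    AbsContOn (fun t => H (x t)) A B ∧
    ∀ t ∈ Set.Icc A B, ∀ dψ dx : ℝ,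
      HasDerivAt (fun s => H (x s)) dψ t → HasDerivAt x dx t →
      ∀ p ∈ subdiffOn H U (x t), dψ = p * dx := by
  constructor
  · -- Absolute continuity of `H ∘ x`
    -- Step 1: `x` is (uniformly) continuous on `[A, B]`.
    have hxuc : ∀ ε > (0:ℝ), ∃ δ > (0:ℝ), ∀ s t : ℝ, A ≤ s → s ≤ t → t ≤ B →
        t - s < δ → |x t - x s| < ε := by
      intro ε hε
      obtain ⟨δ, hδ, h⟩ := hx ε hε
      refine ⟨δ, hδ, fun s t hs hst htB hd => ?_⟩
      have := h 1 (fun _ => s) (fun _ => t) (fun _ => ⟨hs, hst, htB⟩)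
        (fun i j hij => absurd (Subsingleton.elim i j) hij) (by simpa using hd)
      simpa using this
    have hxc : ContinuousOn x (Set.Icc A B) := by
      rw [Metric.continuousOn_iff]
      intro b hb ε hε
      obtain ⟨δ, hδ, h⟩ := hxuc ε hε
      refine ⟨δ, hδ, fun a ha hab => ?_⟩
      rw [Real.dist_eq] at hab ⊢
      rcases le_total a b with hab' | hab'
      · rw [abs_sub_comm]
        exact h a b ha.1 hab' hb.2 (by rw [abs_sub_comm] at hab; exact lt_of_le_of_lt (le_abs_self _) hab)
      · exact h b a hb.1 hab' ha.2 (lt_of_le_of_lt (le_abs_self _) hab)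
    -- Step 2: the image of `x` is contained in a compact interval `[m, M] ⊆ U`.
    have hKcpt : IsCompact (x '' Set.Icc A B) := (isCompact_Icc).image_of_continuousOn hxc
    have hKne : (x '' Set.Icc A B).Nonempty :=
      ⟨x A, Set.mem_image_of_mem _ ⟨le_refl A, hAB.le⟩⟩
    obtain ⟨m, hmK, hmlb⟩ := hKcpt.exists_isLeast hKne
    obtain ⟨M, hMK, hMub⟩ := hKcpt.exists_isGreatest hKne
    have hmU : m ∈ U := by obtain ⟨s, hs, rfl⟩ := hmK; exact hmaps s hs
    have hMU : M ∈ U := by obtain ⟨s, hs, rfl⟩ := hMK; exact hmaps s hs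
    have hmM : m ≤ M := hmlb hMK
    have hIccU : Set.Icc m M ⊆ U := hUconv.ordConnected.out hmU hMU
    -- Step 3: fatten `[m, M]` inside `U`.
    obtain ⟨δ, hδ, hthick⟩ :=
      (isCompact_Icc : IsCompact (Set.Icc m M)).exists_thickening_subset_open hUopen hIccU
    have hmem_le : (m - δ/2) ∈ U := by
      refine hthick ?_
      rw [Metric.mem_thickening_iff]
      exact ⟨m, Set.left_mem_Icc.2 hmM, by rw [Real.dist_eq]; rw [abs_of_nonpos (by linarith)]; linarith⟩
    have hmem_ge : (M + δ/2) ∈ U := by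
      refine hthick ?_
      rw [Metric.mem_thickening_iff]
      exact ⟨M, Set.right_mem_Icc.2 hmM, by rw [Real.dist_eq]; rw [abs_of_nonneg (by linarith)]; linarith⟩
    have hIcc2U : Set.Icc (m - δ/2) (M + δ/2) ⊆ U := hUconv.ordConnected.out hmem_le hmem_ge
    -- Step 4: `H` is Lipschitz on a ball containing `[m, M]`.
    set x₀ : ℝ := (m + M) / 2 with hx₀
    set r₂ : ℝ := (M - m) / 2 + δ/2 with hr₂
    set r₁ : ℝ := (M - m) / 2 + δ/4 with hr₁
    have hball2 : Metric.ball x₀ r₂ ⊆ Set.Icc (m - δ/2) (M + δ/2) := by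
      intro y hy
      rw [Metric.mem_ball, Real.dist_eq, abs_lt] at hy
      simp only [hx₀, hr₂] at hy
      constructor <;> [linarith [hy.1]; linarith [hy.2]]
    have hballU : Metric.ball x₀ r₂ ⊆ U := hball2.trans hIcc2U
    have hHball : ConcaveOn ℝ (Metric.ball x₀ r₂) H := hH.subset hballU (convex_ball _ _)
    have hHcont : ContinuousOn H U := hH.continuousOn hUopen
    have hbdd : Bornology.IsBounded (H '' Metric.ball x₀ r₂) := by
      have hcb : Metric.closedBall x₀ r₂ ⊆ Set.Icc (m - δ/2) (M + δ/2) := by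
        intro y hy
        rw [Metric.mem_closedBall, Real.dist_eq, abs_le] at hy
        simp only [hx₀, hr₂] at hy
        constructor <;> [linarith [hy.1]; linarith [hy.2]]
      have : IsCompact (H '' Metric.closedBall x₀ r₂) :=
        (isCompact_closedBall x₀ r₂).image_of_continuousOn (hHcont.mono (hcb.trans hIcc2U))
      exact this.isBounded.subset (Set.image_mono Metric.ball_subset_closedBall)
    obtain ⟨L, hL⟩ := hHball.exists_lipschitzOnWith_of_isBounded
      (show r₁ < r₂ by rw [hr₁, hr₂]; linarith) hbdd
    have hmem_ball : ∀ s ∈ Set.Icc A B, x s ∈ Metric.ball x₀ r₁ := by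
      intro s hs
      have h1 : m ≤ x s := hmlb (Set.mem_image_of_mem _ hs)
      have h2 : x s ≤ M := hMub (Set.mem_image_of_mem _ hs)
      rw [Metric.mem_ball, Real.dist_eq, abs_lt]
      constructor <;> [skip; skip] <;> simp only [hx₀, hr₁] <;> linarith
    have hlip : ∀ a b : ℝ, a ∈ Set.Icc A B → b ∈ Set.Icc A B →
        |H (x a) - H (x b)| ≤ (L : ℝ) * |x a - x b| := by
      intro a b ha hb
      have := hL.dist_le_mul (x a) (hmem_ball a ha) (x b) (hmem_ball b hb)
      rwa [Real.dist_eq, Real.dist_eq] at this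
    -- Step 5: conclude absolute continuity.
    intro ε hε
    set L' : ℝ := (L : ℝ) + 1 with hL'def
    have hL'pos : 0 < L' := by positivity
    obtain ⟨δ₁, hδ₁, h⟩ := hx (ε / L') (div_pos hε hL'pos)
    refine ⟨δ₁, hδ₁, fun n s t hst hdisj hsum => ?_⟩
    have hx_sum := h n s t hst hdisj hsum
    calc ∑ i, |H (x (t i)) - H (x (s i))|
        ≤ ∑ i, L' * |x (t i) - x (s i)| := by
          refine Finset.sum_le_sum fun i _ => ?_
          have hti : t i ∈ Set.Icc A B := ⟨(hst i).1.trans (hst i).2.1, (hst i).2.2⟩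
          have hsi : s i ∈ Set.Icc A B := ⟨(hst i).1, (hst i).2.1.trans (hst i).2.2⟩
          refine (hlip _ _ hti hsi).trans ?_
          have : (L : ℝ) ≤ L' := by simp [hL'def]
          exact mul_le_mul_of_nonneg_right this (abs_nonneg _)
      _ = L' * ∑ i, |x (t i) - x (s i)| := by rw [Finset.mul_sum]
      _ < L' * (ε / L') := by exact mul_lt_mul_of_pos_left hx_sum hL'pos
      _ = ε := by field_simp
  · -- Chain rule through the subgradient
    intro t ht dψ dx hψ hxd p hp
    have hxt : x t ∈ U := hmaps t ht
    have hev : ∀ᶠ s in 𝓝 t, x s ∈ U :=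
      hxd.continuousAt.eventually_mem (hUopen.mem_nhds hxt)
    have hmax : IsLocalMax (fun s => H (x s) - p * x s) t := by
      filter_upwards [hev] with s hs
      have := hp (x s) hs
      nlinarith [this]
    have hg : HasDerivAt (fun s => H (x s) - p * x s) (dψ - p * dx) t :=
      hψ.sub (hxd.const_mul p)
    have := hmax.hasDerivAt_eq_zero hg
    linarith

end
end
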